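/- For permutations τ ∈ S_m and π ∈ S_n, the sum of q^{iMaj(θ)} over all permutations θ ∈ S_{m+n+1} such that, writing θ as the concatenation uv where u is its first m+1 letters and v its last n letters, the standardization of u equals τ with the letter m+1 appended at the end, and the standardization of v equals π, is equal to q^{iMaj(τ)+iMaj(π)} times the Gaussian binomial coefficient C(m+n+1, m+1)_q, as polynomials in q. -/

import Mathlib

/-- The number of inversions of a word `w` (a list of distinct naturals): the number
of pairs of positions `i < j` with `w_i > w_j`. -/
def invWord (w : List ℕ) : ℕ :=
  ((Finset.range w.length ×ˢ Finset.range w.length).filter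
    (fun q : ℕ × ℕ => q.1 < q.2 ∧ w.getD q.2 0 < w.getD q.1 0)).card

/-- The inverse major index of a permutation word `w` of `{1,…,n}`: the sum of the
descents of the inverse permutation, i.e. the sum of the values `i ∈ {1,…,n-1}` such
that `i+1` occurs before `i` in `w`. -/
def imajWord (w : List ℕ) : ℕ :=
  ∑ k ∈ Finset.range w.length,
    if w.idxOf (k + 2) < w.idxOf (k + 1) then k + 1 else 0


/-- The standardization of a word `w` of distinct letters: each letter is replaced by
its (1-based) rank among the letters of `w`. -/
def stdWord (w : List ℕ) : List ℕ :=
  w.map (fun a => (w.filter (fun b => b < a)).length + 1)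

/-- The permutations of `{1,…,n}`, as words (lists of values). -/
def permWords (n : ℕ) : Finset (List ℕ) := ((List.range' 1 n).permutations).toFinset

/-- The `q`-integer `[n]_q = 1 + q + ⋯ + q^{n-1}` in `ℚ(q)`. -/
noncomputable def qInt (n : ℕ) : RatFunc ℚ := ∑ k ∈ Finset.range n, RatFunc.X ^ k

/-- The `q`-factorial `[n]_q! = [1]_q [2]_q ⋯ [n]_q` in `ℚ(q)`. -/
noncomputable def qFact (n : ℕ) : RatFunc ℚ := ∏ k ∈ Finset.range n, qInt (k + 1)

/-- The Gaussian binomial coefficient `C(a,b)_q = [a]_q!/([b]_q! [a-b]_q!)` in `ℚ(q)`. -/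
noncomputable def gaussBinom (a b : ℕ) : RatFunc ℚ := qFact a / (qFact b * qFact (a - b))

namespace S16
open Finset List

/-! ### Tuples: lists of length L with entries ≤ M -/

def tuples : ℕ → ℕ → Finset (List ℕ)
  | 0, _ => {[]}
  | (L+1), M => (Finset.range (M+1)).biUnion fun a => ((tuples L M).image (a :: ·))

lemma mem_tuples {L M : ℕ} {g : List ℕ} :
    g ∈ tuples L M ↔ g.length = L ∧ ∀ x ∈ g, x ≤ M := by
  induction L generalizing g with
  | zero =>
    simp only [tuples, Finset.mem_singleton]
    constructor
    · rintro rfl; simp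
    · rintro ⟨h, -⟩; exact List.length_eq_zero_iff.mp h
  | succ L ih =>
    simp only [tuples, Finset.mem_biUnion, Finset.mem_range, Finset.mem_image]
    constructor
    · rintro ⟨a, ha, g', hg', rfl⟩
      obtain ⟨h1, h2⟩ := ih.mp hg'
      refine ⟨by simp [h1], ?_⟩
      intro x hx
      rcases List.mem_cons.mp hx with rfl | hx
      · omega
      · exact h2 x hx
    · rintro ⟨h1, h2⟩
      rcases g with - | ⟨a, g'⟩
      · simp at h1
      · refine ⟨a, ?_, g', ih.mpr ⟨by simpa using h1, fun x hx => h2 x (List.mem_cons_of_mem _ hx)⟩, rfl⟩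
        have := h2 a (List.mem_cons_self)
        omega

/-! ### Labellings with a strictness pattern -/

def okpat (E : Finset ℕ) (L : ℕ) (g : List ℕ) : Prop :=
  ∀ i ∈ Finset.Icc 1 (L-1), g.getD i 0 ≤ g.getD (i-1) 0 ∧ (i ∈ E → g.getD i 0 < g.getD (i-1) 0)

instance (E : Finset ℕ) (L : ℕ) (g : List ℕ) : Decidable (okpat E L g) := by
  unfold okpat; infer_instance

def LabF (E : Finset ℕ) (L M : ℕ) : Finset (List ℕ) := (tuples L M).filter (okpat E L)

noncomputable def LS (E : Finset ℕ) (L M : ℕ) : RatFunc ℚ :=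
  ∑ g ∈ LabF E L M, RatFunc.X ^ g.sum

lemma mem_LabF {E : Finset ℕ} {L M : ℕ} {g : List ℕ} :
    g ∈ LabF E L M ↔ (g.length = L ∧ ∀ x ∈ g, x ≤ M) ∧ okpat E L g := by
  rw [LabF, Finset.mem_filter, mem_tuples]

lemma labf_length {E L M} {g : List ℕ} (hg : g ∈ LabF E L M) : g.length = L :=
  (mem_LabF.mp hg).1.1

lemma labf_getD_le {E L M} {g : List ℕ} (hg : g ∈ LabF E L M) (j : ℕ) : g.getD j 0 ≤ M := by
  by_cases h : j < g.length
  · rw [List.getD_eq_getElem _ _ h]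
    exact (mem_LabF.mp hg).1.2 _ (List.getElem_mem h)
  · rw [List.getD_eq_default _ _ (by omega)]; exact Nat.zero_le _

lemma labf_anti {E L M} {g : List ℕ} (hg : g ∈ LabF E L M) :
    ∀ a b, a ≤ b → g.getD b 0 ≤ g.getD a 0 := by
  intro a b hab
  induction b, hab using Nat.le_induction with
  | base => exact le_rfl
  | succ b hab ih =>
    refine le_trans ?_ ih
    by_cases h : b + 1 ≤ L - 1
    · exact ((mem_LabF.mp hg).2 (b+1) (Finset.mem_Icc.mpr ⟨by omega, h⟩)).1
    · rw [List.getD_eq_default _ _ (by rw [labf_length hg]; omega)]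
      exact Nat.zero_le _

lemma labf_step {E L M} {g : List ℕ} (hg : g ∈ LabF E L M) {i : ℕ}
    (h1 : 1 ≤ i) (h2 : i ≤ L - 1) (hE : i ∈ E) : g.getD i 0 < g.getD (i-1) 0 :=
  ((mem_LabF.mp hg).2 i (Finset.mem_Icc.mpr ⟨h1, h2⟩)).2 hE

lemma labf_strict {E L M} {g : List ℕ} (hg : g ∈ LabF E L M) {a i b : ℕ}
    (ha : a ≤ i - 1) (h1 : 1 ≤ i) (h2 : i ≤ L - 1) (hE : i ∈ E) (hb : i ≤ b) :
    g.getD b 0 < g.getD a 0 :=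
  lt_of_le_of_lt (labf_anti hg i b hb)
    (lt_of_lt_of_le (labf_step hg h1 h2 hE) (labf_anti hg a (i-1) ha))

/-! ### helper list lemmas -/

lemma getD_range_map (F : ℕ → ℕ) {j L : ℕ} (h : j < L) :
    ((List.range L).map F).getD j 0 = F j := by
  rw [List.getD_eq_getElem _ _ (by simpa using h)]
  simp

lemma sum_range_map (F : ℕ → ℕ) (L : ℕ) :
    ((List.range L).map F).sum = ∑ j ∈ Finset.range L, F j := by
  induction L with
  | zero => simp
  | succ L ih => rw [List.range_succ, Finset.sum_range_succ, List.map_append, List.sum_append, ih]; simp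

lemma sum_eq_sum_getD (g : List ℕ) : g.sum = ∑ j ∈ Finset.range g.length, g.getD j 0 := by
  rw [← sum_range_map]
  congr 1
  refine (List.ext_getElem (by simp) ?_).symm
  intro n h1 h2
  simp only [List.getElem_map, List.getElem_range]
  rw [List.getD_eq_getElem _ _ h2]

lemma range_map_getD {g : List ℕ} {L : ℕ} (h : g.length = L) :
    (List.range L).map (fun j => g.getD j 0) = g := by
  refine List.ext_getElem (by simp [h]) ?_
  intro n h1 h2
  simp only [List.getElem_map, List.getElem_range]
  rw [List.getD_eq_getElem _ _ h2]

lemma range'_map_getD {g : List ℕ} {L : ℕ} (h : g.length = L) :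
    (List.range' 1 L).map (fun v => g.getD (v-1) 0) = g := by
  refine List.ext_getElem (by simp [h]) ?_
  intro n h1 h2
  simp only [List.getElem_map, List.getElem_range']
  have : 1 + 1 * n - 1 = n := by omega
  rw [this, List.getD_eq_getElem _ _ h2]

/-! ### the antitone/filter counting workhorse -/

lemma anti_filter {p : ℕ → Bool} (hp : ∀ x y, x ≤ y → p x → p y) :
    ∀ (f : List ℕ), (∀ a b, a ≤ b → f.getD b 0 ≤ f.getD a 0) →
      ∀ r, r < f.length → (p (f.getD r 0) ↔ r < (f.filter p).length) := by
  intro f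
  induction f with
  | nil => intro _ r hr; simp at hr
  | cons x f ih =>
    intro hanti r hr
    have htail : ∀ a b, a ≤ b → f.getD b 0 ≤ f.getD a 0 := by
      intro a b hab
      have := hanti (a+1) (b+1) (by omega)
      simpa using this
    by_cases hx : p x
    · rw [List.filter_cons_of_pos hx]
      rcases r with - | r
      · simpa using hx
      · simp only [List.getD_cons_succ, List.length_cons]
        rw [ih htail r (by simpa using hr)]
        omega
    · have hnone : ∀ y ∈ (x :: f), ¬ (p y = true) := by
        intro y hy hpy
        rcases List.mem_cons.mp hy with rfl | hy
        · exact hx hpy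
        · obtain ⟨j, hj, rfl⟩ := List.mem_iff_getElem.mp hy
          have h1 : f.getD j 0 ≤ x := by
            have := hanti 0 (j+1) (by omega)
            simpa [List.getD_eq_getElem f 0 hj] using this
          rw [List.getD_eq_getElem f 0 hj] at h1
          exact hx (hp _ _ h1 hpy)
      rw [List.filter_eq_nil_iff.mpr hnone]
      simp only [List.length_nil]
      constructor
      · intro hc
        exfalso
        refine hnone _ ?_ hc
        rw [List.getD_eq_getElem _ _ hr]
        exact List.getElem_mem hr
      · omega

lemma sorted_desc_getD {l : List ℕ} (hs : ∀ a b, a ≤ b → l.getD b 0 ≤ l.getD a 0) {c pos : ℕ}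
    (h1 : (l.filter (fun y => decide (c < y))).length ≤ pos)
    (h2 : pos < (l.filter (fun y => decide (c ≤ y))).length) : l.getD pos 0 = c := by
  have hpos : pos < l.length := lt_of_lt_of_le h2 (List.length_filter_le _ _)
  have A := anti_filter (p := fun y => decide (c < y))
    (by intro x y hxy hx; simp at hx ⊢; omega) l hs pos hpos
  have B := anti_filter (p := fun y => decide (c ≤ y))
    (by intro x y hxy hx; simp at hx ⊢; omega) l hs pos hpos
  simp only [decide_eq_true_eq] at A B
  have hA : ¬ (c < l.getD pos 0) := by rw [A]; omega
  have hB : c ≤ l.getD pos 0 := B.mpr h2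
  omega

/-! ### the shift bijection -/

def dE (E : Finset ℕ) (j : ℕ) : ℕ := (E.filter (fun e => j < e)).card

lemma dE_zero {E : Finset ℕ} {L : ℕ} (hE : E ⊆ Finset.Icc 1 (L-1)) : dE E 0 = E.card := by
  unfold dE
  congr 1
  refine Finset.filter_true_of_mem ?_
  intro e he
  have := hE he
  simp only [Finset.mem_Icc] at this
  exact this.1

lemma dE_succ (E : Finset ℕ) (j : ℕ) :
    dE E j = dE E (j+1) + (if (j+1) ∈ E then 1 else 0) := by
  unfold dE
  have : E.filter (fun e => j < e) =
      (E.filter (fun e => j+1 < e)) ∪ (E.filter (fun e => e = j+1)) := by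
    ext e
    simp only [Finset.mem_filter, Finset.mem_union]
    by_cases he : e ∈ E <;> simp [he] <;> omega
  rw [this, Finset.card_union_of_disjoint]
  · congr 1
    by_cases h : (j+1) ∈ E
    · rw [if_pos h]
      rw [show E.filter (fun e => e = j+1) = {j+1} from ?_]
      · simp
      · ext e; simp only [Finset.mem_filter, Finset.mem_singleton]
        constructor
        · rintro ⟨-, rfl⟩; rfl
        · rintro rfl; exact ⟨h, rfl⟩
    · rw [if_neg h]
      rw [Finset.card_eq_zero]
      ext e; simp only [Finset.mem_filter, Finset.notMem_empty, iff_false, not_and]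
      rintro he rfl; exact h he
  · exact Finset.disjoint_left.mpr (by intro a ha hb; simp at ha hb; omega)

lemma dE_top {E : Finset ℕ} {L : ℕ} (hE : E ⊆ Finset.Icc 1 (L-1)) {j : ℕ} (hj : L-1 ≤ j) :
    dE E j = 0 := by
  unfold dE
  rw [Finset.card_eq_zero]
  ext e
  simp only [Finset.mem_filter, Finset.notMem_empty, iff_false, not_and]
  intro he
  have := hE he; simp only [Finset.mem_Icc] at this
  omega

lemma dE_le_card (E : Finset ℕ) (j : ℕ) : dE E j ≤ E.card :=
  Finset.card_filter_le _ _

lemma sum_dE {E : Finset ℕ} {L : ℕ} (hE : E ⊆ Finset.Icc 1 (L-1)) :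
    ∑ j ∈ Finset.range L, dE E j = ∑ e ∈ E, e := by
  unfold dE
  have : ∀ j, (E.filter (fun e => j < e)).card = ∑ e ∈ E, if j < e then 1 else 0 := by
    intro j; rw [Finset.card_filter]
  simp_rw [this]
  rw [Finset.sum_comm]
  refine Finset.sum_congr rfl ?_
  intro e he
  have h1 := hE he
  simp only [Finset.mem_Icc] at h1
  have : ∀ j ∈ Finset.range L, (if j < e then (1:ℕ) else 0) = if j ∈ Finset.range e then 1 else 0 := by
    intro j hj; simp only [Finset.mem_range]
  rw [Finset.sum_congr rfl this]
  have : ∑ j ∈ Finset.range L, (if j ∈ Finset.range e then (1:ℕ) else 0)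
      = ((Finset.range L).filter (fun j => j ∈ Finset.range e)).card := (Finset.card_filter _ _).symm
  rw [this]
  have : (Finset.range L).filter (fun j => j ∈ Finset.range e) = Finset.range e := by
    ext j; simp only [Finset.mem_filter, Finset.mem_range]; omega
  rw [this, Finset.card_range]

lemma labf_ge_dE {E : Finset ℕ} {L M : ℕ} {g : List ℕ} (hE : E ⊆ Finset.Icc 1 (L-1))
    (hg : g ∈ LabF E L M) : ∀ j, dE E j ≤ g.getD j 0 := by
  have key : ∀ c j, L - 1 ≤ j + c → dE E j ≤ g.getD j 0 := by
    intro c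
    induction c with
    | zero =>
      intro j hj
      rw [dE_top hE (by omega)]
      exact Nat.zero_le _
    | succ c ih =>
      intro j hj
      by_cases h : L - 1 ≤ j
      · rw [dE_top hE h]; exact Nat.zero_le _
      · have h2 := ih (j+1) (by omega)
        have h3 := ((mem_LabF.mp hg).2 (j+1) (Finset.mem_Icc.mpr ⟨by omega, by omega⟩))
        rw [dE_succ E j]
        by_cases hEj : (j+1) ∈ E
        · have := h3.2 hEj
          simp only [Nat.add_sub_cancel] at this
          rw [if_pos hEj]
          omega
        · have := h3.1
          simp only [Nat.add_sub_cancel] at this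
          rw [if_neg hEj]
          omega
  intro j
  exact key L j (by omega)

lemma labf_le_bound {E : Finset ℕ} {L M : ℕ} {g : List ℕ} (hE : E ⊆ Finset.Icc 1 (L-1))
    (hM : E.card ≤ M) (hg : g ∈ LabF E L M) :
    ∀ j, g.getD j 0 + E.card ≤ M + dE E j := by
  intro j
  induction j with
  | zero =>
    rw [dE_zero hE]
    have := labf_getD_le hg 0
    omega
  | succ j ih =>
    by_cases h : j + 1 ≤ L - 1
    · have h3 := ((mem_LabF.mp hg).2 (j+1) (Finset.mem_Icc.mpr ⟨by omega, h⟩))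
      rw [dE_succ E j] at ih
      by_cases hEj : (j+1) ∈ E
      · have := h3.2 hEj
        simp only [Nat.add_sub_cancel] at this
        rw [if_pos hEj] at ih
        omega
      · have := h3.1
        simp only [Nat.add_sub_cancel] at this
        rw [if_neg hEj] at ih
        omega
    · rw [List.getD_eq_default _ _ (by rw [labf_length hg]; omega)]
      have := dE_le_card E (j+1)
      omega

theorem shift {E : Finset ℕ} {L M : ℕ} (hE : E ⊆ Finset.Icc 1 (L-1)) (hM : E.card ≤ M) :
    LS E L M = RatFunc.X ^ (∑ e ∈ E, e) * LS ∅ L (M - E.card) := by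
  unfold LS
  rw [Finset.mul_sum]
  refine Finset.sum_nbij'
    (i := fun g => (List.range L).map (fun j => g.getD j 0 - dE E j))
    (j := fun g' => (List.range L).map (fun j => g'.getD j 0 + dE E j))
    ?_ ?_ ?_ ?_ ?_
  · -- forward membership
    intro g hg
    rw [mem_LabF]
    refine ⟨⟨by simp, ?_⟩, ?_⟩
    · intro x hx
      simp only [List.mem_map, List.mem_range] at hx
      obtain ⟨j, hj, rfl⟩ := hx
      have h1 := labf_le_bound hE hM hg j
      have h2 := dE_le_card E j
      omega
    · intro i hi
      simp only [Finset.mem_Icc] at hi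
      rw [getD_range_map _ (by omega), getD_range_map _ (by omega)]
      have hp := (mem_LabF.mp hg).2 i (Finset.mem_Icc.mpr hi)
      have hsucc := dE_succ E (i-1)
      rw [show (i-1)+1 = i by omega] at hsucc
      have hge1 := labf_ge_dE hE hg i
      have hge2 := labf_ge_dE hE hg (i-1)
      refine ⟨?_, ?_⟩
      · by_cases hEi : i ∈ E
        · have := hp.2 hEi; rw [if_pos hEi] at hsucc; omega
        · have := hp.1; rw [if_neg hEi] at hsucc; omega
      · intro h; exact absurd h (Finset.notMem_empty i)
  · -- backward membership
    intro g' hg'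
    rw [mem_LabF]
    refine ⟨⟨by simp, ?_⟩, ?_⟩
    · intro x hx
      simp only [List.mem_map, List.mem_range] at hx
      obtain ⟨j, hj, rfl⟩ := hx
      have h1 := labf_getD_le hg' j
      have h2 := dE_le_card E j
      omega
    · intro i hi
      simp only [Finset.mem_Icc] at hi
      rw [getD_range_map _ (by omega), getD_range_map _ (by omega)]
      have hp := (mem_LabF.mp hg').2 i (Finset.mem_Icc.mpr hi)
      have hsucc := dE_succ E (i-1)
      rw [show (i-1)+1 = i by omega] at hsucc
      refine ⟨?_, ?_⟩
      · by_cases hEi : i ∈ E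
        · rw [if_pos hEi] at hsucc; have := hp.1; omega
        · rw [if_neg hEi] at hsucc; have := hp.1; omega
      · intro hEi
        rw [if_pos hEi] at hsucc
        have := hp.1
        omega
  · -- left inverse
    intro g hg
    refine List.ext_getElem (by simp [labf_length hg]) ?_
    intro n h1 h2
    simp only [List.length_map, List.length_range] at h1
    simp only [List.getElem_map, List.getElem_range]
    rw [getD_range_map _ h1]
    have := labf_ge_dE hE hg n
    have hsub : g.getD n 0 - dE E n + dE E n = g.getD n 0 := by omega
    rw [hsub, List.getD_eq_getElem _ _ h2]
  · -- right inverse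
    intro g' hg'
    refine List.ext_getElem (by simp [labf_length hg']) ?_
    intro n h1 h2
    simp only [List.length_map, List.length_range] at h1
    simp only [List.getElem_map, List.getElem_range]
    rw [getD_range_map _ h1]
    have hsub : g'.getD n 0 + dE E n - dE E n = g'.getD n 0 := by omega
    rw [hsub, List.getD_eq_getElem _ _ h2]
  · -- weights
    intro g hg
    rw [← pow_add]
    congr 1
    have hsum : ((List.range L).map (fun j => g.getD j 0 - dE E j)).sum
        = ∑ j ∈ Finset.range L, (g.getD j 0 - dE E j) := sum_range_map _ _
    rw [hsum, ← sum_dE hE]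
    have h1 : g.sum = ∑ j ∈ Finset.range L, g.getD j 0 := by
      rw [sum_eq_sum_getD, labf_length hg]
    rw [h1, ← Finset.sum_add_distrib]
    refine Finset.sum_congr rfl ?_
    intro j hj
    have := labf_ge_dE hE hg j
    omega

end S16
namespace S16
open Finset List

/-! ### counting box-bounded decreasing sequences -/

lemma LabF_zero (M : ℕ) : LabF ∅ 0 M = {[]} := by
  ext g
  rw [mem_LabF]
  constructor
  · rintro ⟨⟨h, -⟩, -⟩
    simpa using List.length_eq_zero_iff.mp h
  · rintro h
    simp only [Finset.mem_singleton] at h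
    subst h
    refine ⟨⟨rfl, by simp⟩, ?_⟩
    intro i hi
    simp at hi

lemma LS_zero (M : ℕ) : LS ∅ 0 M = 1 := by
  rw [LS, LabF_zero]
  simp

lemma getD_replicate_zero (L j : ℕ) : (List.replicate L (0:ℕ)).getD j 0 = 0 := by
  by_cases h : j < L
  · rw [List.getD_eq_getElem _ _ (by simpa using h)]
    simp
  · rw [List.getD_eq_default _ _ (by simpa using h)]

lemma LabF_M0 (L : ℕ) : LabF ∅ L 0 = {List.replicate L 0} := by
  ext g
  rw [mem_LabF]
  constructor
  · rintro ⟨⟨h1, h2⟩, -⟩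
    simp only [Finset.mem_singleton]
    refine List.eq_replicate_iff.mpr ⟨h1, fun b hb => Nat.le_zero.mp (h2 b hb)⟩
  · intro h
    simp only [Finset.mem_singleton] at h
    subst h
    refine ⟨⟨by simp, ?_⟩, ?_⟩
    · intro x hx
      exact le_of_eq (List.eq_of_mem_replicate hx)
    · intro i hi
      simp [getD_replicate_zero]

lemma LS_M0 (L : ℕ) : LS ∅ L 0 = 1 := by
  rw [LS, LabF_M0]
  simp

lemma LS_rec (L M : ℕ) (hL : 1 ≤ L) (hM : 1 ≤ M) :
    LS ∅ L M = LS ∅ L (M-1) + RatFunc.X ^ M * LS ∅ (L-1) M := by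
  unfold LS
  rw [← Finset.sum_filter_add_sum_filter_not (LabF ∅ L M) (fun g => g.getD 0 0 = M), add_comm]
  congr 1
  · -- the part with top value < M
    congr 1
    ext g
    simp only [Finset.mem_filter, mem_LabF]
    constructor
    · rintro ⟨⟨⟨h1, h2⟩, h3⟩, h4⟩
      refine ⟨⟨h1, ?_⟩, h3⟩
      intro x hx
      obtain ⟨j, hj, rfl⟩ := List.mem_iff_getElem.mp hx
      have hle : g.getD j 0 ≤ g.getD 0 0 := labf_anti (mem_LabF.mpr ⟨⟨h1, h2⟩, h3⟩) 0 j (by omega)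
      have h0 : g.getD 0 0 ≤ M := labf_getD_le (mem_LabF.mpr ⟨⟨h1, h2⟩, h3⟩) 0
      rw [List.getD_eq_getElem _ _ hj] at hle
      omega
    · rintro ⟨⟨h1, h2⟩, h3⟩
      have hg : ∀ x ∈ g, x ≤ M := fun x hx => le_trans (h2 x hx) (by omega)
      refine ⟨⟨⟨h1, hg⟩, h3⟩, ?_⟩
      have : g.getD 0 0 ≤ M - 1 := by
        by_cases h : 0 < g.length
        · rw [List.getD_eq_getElem _ _ h]
          exact h2 _ (List.getElem_mem h)
        · rw [List.getD_eq_default _ _ (by omega)]; omega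
      omega
  · -- the part with top value = M
    rw [Finset.mul_sum]
    refine Finset.sum_nbij' (i := fun g => g.tail) (j := fun g₂ => M :: g₂) ?_ ?_ ?_ ?_ ?_
    · intro g hg
      simp only [Finset.mem_filter] at hg
      obtain ⟨hg, htop⟩ := hg
      obtain ⟨⟨h1, h2⟩, h3⟩ := mem_LabF.mp hg
      rcases g with - | ⟨a, t⟩
      · simp at h1; omega
      · simp only [List.tail_cons]
        rw [mem_LabF]
        refine ⟨⟨by simp only [List.length_cons] at h1; omega, fun x hx => h2 x (List.mem_cons_of_mem _ hx)⟩, ?_⟩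
        intro i hi
        simp only [Finset.mem_Icc] at hi
        have hp := h3 (i+1) (Finset.mem_Icc.mpr ⟨by omega, by omega⟩)
        simp only [Nat.add_sub_cancel, List.getD_cons_succ] at hp
        rw [show i = (i-1)+1 by omega] at hp
        simp only [List.getD_cons_succ] at hp
        rw [show (i-1)+1 = i by omega] at hp
        refine ⟨hp.1, ?_⟩
        intro h; exact absurd h (Finset.notMem_empty i)
    · intro g₂ hg₂
      obtain ⟨⟨h1, h2⟩, h3⟩ := mem_LabF.mp hg₂
      simp only [Finset.mem_filter]
      refine ⟨mem_LabF.mpr ⟨⟨by simp only [List.length_cons, h1]; omega, ?_⟩, ?_⟩, by simp⟩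
      · intro x hx
        rcases List.mem_cons.mp hx with rfl | hx
        · exact le_rfl
        · exact h2 x hx
      · intro i hi
        simp only [Finset.mem_Icc] at hi
        refine ⟨?_, fun h => absurd h (Finset.notMem_empty i)⟩
        rcases Nat.eq_or_lt_of_le hi.1 with h | h
        · rw [← h]
          simp only [List.getD_cons_succ, Nat.sub_self, List.getD_cons_zero]
          exact labf_getD_le hg₂ 0
        · have hp := h3 (i-1) (Finset.mem_Icc.mpr ⟨by omega, by omega⟩)
          rw [show i = (i-1)+1 by omega]
          simp only [List.getD_cons_succ, Nat.add_sub_cancel]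
          rw [show i-1 = (i-2)+1 by omega]
          simp only [List.getD_cons_succ]
          rw [show (i-2)+1 = i-1 by omega]
          rw [show i-1-1 = i-2 by omega] at hp
          exact hp.1
    · intro g hg
      simp only [Finset.mem_filter] at hg
      obtain ⟨hg, htop⟩ := hg
      rcases g with - | ⟨a, t⟩
      · have := labf_length hg; simp at this; omega
      · simp only [List.getD_cons_zero] at htop
        simp [htop]
    · intro g₂ hg₂
      simp
    · intro g hg
      simp only [Finset.mem_filter] at hg
      obtain ⟨hg, htop⟩ := hg
      rcases g with - | ⟨a, t⟩
      · have := labf_length hg; simp at this; omega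
      · simp only [List.getD_cons_zero] at htop
        subst htop
        simp only [List.tail_cons, List.sum_cons, pow_add]

noncomputable def Dpoly (L : ℕ) : RatFunc ℚ := ∏ i ∈ Finset.range L, (1 - RatFunc.X ^ (i+1))

theorem wprod : ∀ L M : ℕ, LS ∅ L M * Dpoly L = ∏ i ∈ Finset.range L, (1 - RatFunc.X ^ (M+i+1)) := by
  intro L
  induction L with
  | zero => intro M; simp [LS_zero, Dpoly]
  | succ L ihL =>
    intro M
    induction M with
    | zero =>
      rw [LS_M0, one_mul, Dpoly]
      exact Finset.prod_congr rfl (fun i _ => by norm_num)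
    | succ M ihM =>
      rw [LS_rec (L+1) (M+1) (by omega) (by omega)]
      simp only [Nat.add_sub_cancel]
      have hD : Dpoly (L+1) = Dpoly L * (1 - RatFunc.X ^ (L+1)) := by
        rw [Dpoly, Dpoly, Finset.prod_range_succ]
      have e1 : ∏ i ∈ Finset.range (L+1), (1 - RatFunc.X ^ (M+i+1))
          = (1 - (RatFunc.X : RatFunc ℚ) ^ (M+1)) * ∏ i ∈ Finset.range L, (1 - RatFunc.X ^ (M+2+i)) := by
        rw [Finset.prod_range_succ']
        rw [mul_comm]
        congr 1
        refine Finset.prod_congr rfl (fun i _ => ?_)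
        congr 2
        omega
      have e2 : ∏ i ∈ Finset.range (L+1), (1 - RatFunc.X ^ (M+1+i+1))
          = (∏ i ∈ Finset.range L, (1 - (RatFunc.X : RatFunc ℚ) ^ (M+2+i))) * (1 - RatFunc.X ^ (M+L+2)) := by
        rw [Finset.prod_range_succ]
        congr 1
        · refine Finset.prod_congr rfl (fun i _ => ?_); congr 2; omega
        · congr 2; omega
      have e3 : LS ∅ L (M+1) * Dpoly L = ∏ i ∈ Finset.range L, (1 - RatFunc.X ^ (M+2+i)) := by
        rw [ihL (M+1)]
        refine Finset.prod_congr rfl (fun i _ => ?_); congr 2; omega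
      rw [add_mul, ihM, e1, e2, hD]
      have e4 : RatFunc.X ^ (M+1) * LS ∅ L (M+1) * (Dpoly L * (1 - RatFunc.X ^ (L+1)))
          = RatFunc.X ^ (M+1) * (1 - RatFunc.X ^ (L+1)) * (∏ i ∈ Finset.range L, (1 - RatFunc.X ^ (M+2+i))) := by
        rw [← e3]; ring
      rw [e4]
      have e5 : (RatFunc.X : RatFunc ℚ) ^ (M+L+2) = RatFunc.X ^ (M+1) * RatFunc.X ^ (L+1) := by
        rw [← pow_add]; congr 1; omega
      rw [e5]
      ring

/-! ### algebra for gaussBinom -/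

lemma X_pow_injective : Function.Injective (fun M : ℕ => (RatFunc.X : RatFunc ℚ) ^ M) := by
  intro a b h
  simp only at h
  have hX : (RatFunc.X : RatFunc ℚ) = algebraMap (Polynomial ℚ) (RatFunc ℚ) Polynomial.X :=
    (RatFunc.algebraMap_X (K := ℚ)).symm
  rw [hX, ← map_pow, ← map_pow] at h
  have := RatFunc.algebraMap_injective ℚ h
  have h2 := congrArg Polynomial.natDegree this
  simpa using h2

lemma one_sub_X_pow_ne {i : ℕ} (hi : 1 ≤ i) : (1 : RatFunc ℚ) - RatFunc.X ^ i ≠ 0 := by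
  intro h
  have : (RatFunc.X : RatFunc ℚ) ^ i = 1 := by linear_combination -h
  have : (RatFunc.X : RatFunc ℚ) ^ i = RatFunc.X ^ 0 := by simpa using this
  have := X_pow_injective this
  omega

lemma Dpoly_ne (L : ℕ) : Dpoly L ≠ 0 := by
  refine Finset.prod_ne_zero_iff.mpr ?_
  intro i _
  exact one_sub_X_pow_ne (by omega)

lemma qInt_mul (n : ℕ) : qInt n * (1 - RatFunc.X) = 1 - RatFunc.X ^ n := by
  rw [qInt]
  linear_combination (-1 : RatFunc ℚ) * geom_sum_mul (RatFunc.X : RatFunc ℚ) n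

lemma qFact_mul (L : ℕ) : qFact L * (1 - RatFunc.X) ^ L = Dpoly L := by
  induction L with
  | zero => simp [qFact, Dpoly]
  | succ L ih =>
    rw [qFact, Finset.prod_range_succ, ← qFact, Dpoly, Finset.prod_range_succ, ← Dpoly, ← ih,
      ← qInt_mul (L+1)]
    ring

lemma qFact_ne (L : ℕ) : qFact L ≠ 0 := by
  intro h
  have := qFact_mul L
  rw [h, zero_mul] at this
  exact Dpoly_ne L this.symm

lemma one_sub_X_ne : (1 : RatFunc ℚ) - RatFunc.X ≠ 0 := by
  have := one_sub_X_pow_ne (i := 1) le_rfl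
  simpa using this

lemma gaussBinom_eq {N k : ℕ} (hk : k ≤ N) :
    gaussBinom N k = Dpoly N / (Dpoly k * Dpoly (N-k)) := by
  rw [gaussBinom, ← qFact_mul N, ← qFact_mul k, ← qFact_mul (N-k)]
  have hpow : ((1 : RatFunc ℚ) - RatFunc.X)^N = (1 - RatFunc.X)^k * (1 - RatFunc.X)^(N-k) := by
    rw [← pow_add]; congr 1; omega
  rw [hpow]
  have h1 := one_sub_X_ne
  have h2 := qFact_ne k
  have h3 := qFact_ne (N-k)
  have h4 : ((1:RatFunc ℚ) - RatFunc.X)^k ≠ 0 := pow_ne_zero _ h1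
  have h5 : ((1:RatFunc ℚ) - RatFunc.X)^(N-k) ≠ 0 := pow_ne_zero _ h1
  field_simp

end S16
namespace S16
open Finset List

/-! ### sorted lists and ranks -/

lemma sort_sorted_lt (A : Finset ℕ) : List.Pairwise (·<·) (A.sort (·≤·)) :=
  (Finset.sortedLT_sort A).pairwise

lemma eq_of_perm_of_sorted {r : ℕ → ℕ → Prop} [Std.Antisymm r] {l₁ l₂ : List ℕ}
    (hp : l₁.Perm l₂) (h₁ : List.Pairwise r l₁) (h₂ : List.Pairwise r l₂) : l₁ = l₂ :=
  List.Perm.eq_of_pairwise' h₁ h₂ hp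

lemma sorted_getD_strictMono {s : List ℕ} (hs : List.Pairwise (·<·) s) {a b : ℕ}
    (hab : a < b) (hb : b < s.length) : s.getD a 0 < s.getD b 0 := by
  rw [List.getD_eq_getElem _ _ (by omega), List.getD_eq_getElem _ _ hb]
  exact List.pairwise_iff_getElem.mp hs a b (by omega) hb hab

lemma sorted_count_le {s : List ℕ} (hs : List.Pairwise (·<·) s) :
    ∀ r < s.length, (s.filter (fun x => x ≤ s.getD r 0)).length = r + 1 := by
  induction s with
  | nil => intro r hr; simp at hr
  | cons x t ih =>
    have hx : ∀ y ∈ t, x < y := fun y hy => (List.pairwise_cons.mp hs).1 y hy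
    intro r hr
    rcases r with - | r
    · simp only [List.getD_cons_zero]
      rw [List.filter_cons_of_pos (by simp)]
      have ht : t.filter (fun y => y ≤ x) = [] := by
        refine List.filter_eq_nil_iff.mpr ?_
        intro y hy
        simpa using (hx y hy)
      rw [ht]
      simp
    · simp only [List.getD_cons_succ]
      have hmem : t.getD r 0 ∈ t := by
        rw [List.getD_eq_getElem _ _ (by simpa using hr)]
        exact List.getElem_mem _
      rw [List.filter_cons_of_pos (by simpa using le_of_lt (hx _ hmem))]
      rw [List.length_cons, ih (List.pairwise_cons.mp hs).2 r (by simpa using hr)]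

lemma sorted_count_lt {s : List ℕ} (hs : List.Pairwise (·<·) s) :
    ∀ r < s.length, (s.filter (fun x => x < s.getD r 0)).length = r := by
  induction s with
  | nil => intro r hr; simp at hr
  | cons x t ih =>
    have hx : ∀ y ∈ t, x < y := fun y hy => (List.pairwise_cons.mp hs).1 y hy
    intro r hr
    rcases r with - | r
    · simp only [List.getD_cons_zero]
      rw [List.filter_cons_of_neg (by simp)]
      have ht : t.filter (fun y => y < x) = [] := by
        refine List.filter_eq_nil_iff.mpr ?_
        intro y hy
        simp only [decide_eq_true_eq, not_lt]
        exact le_of_lt (hx y hy)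
      rw [ht]
      simp
    · simp only [List.getD_cons_succ]
      have hmem : t.getD r 0 ∈ t := by
        rw [List.getD_eq_getElem _ _ (by simpa using hr)]
        exact List.getElem_mem _
      rw [List.filter_cons_of_pos (by simpa using hx _ hmem)]
      rw [List.length_cons, ih (List.pairwise_cons.mp hs).2 r (by simpa using hr)]

/-- the rank of `v` in `A` : the number of elements of `A` that are `≤ v`. -/
def rk (A : Finset ℕ) (v : ℕ) : ℕ := ((A.sort (·≤·)).filter (fun x => x ≤ v)).length

lemma sort_getD_mem {A : Finset ℕ} {r : ℕ} (h : r < A.card) :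
    (A.sort (·≤·)).getD r 0 ∈ A := by
  rw [← Finset.mem_sort (α := ℕ) (·≤·)]
  rw [List.getD_eq_getElem _ _ (by rwa [Finset.length_sort])]
  exact List.getElem_mem _

lemma rk_sort_getD {A : Finset ℕ} {r : ℕ} (h : r < A.card) :
    rk A ((A.sort (·≤·)).getD r 0) = r + 1 := by
  unfold rk
  exact sorted_count_le (S16.sort_sorted_lt A) r (by rwa [Finset.length_sort])

lemma rk_le_card (A : Finset ℕ) (v : ℕ) : rk A v ≤ A.card := by
  unfold rk
  calc ((A.sort (·≤·)).filter _).length ≤ (A.sort (·≤·)).length := List.length_filter_le _ _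
  _ = A.card := Finset.length_sort _

lemma rk_pos {A : Finset ℕ} {v : ℕ} (hv : v ∈ A) : 1 ≤ rk A v := by
  unfold rk
  have : v ∈ (A.sort (·≤·)).filter (fun x => x ≤ v) := by
    rw [List.mem_filter]
    exact ⟨(Finset.mem_sort (α := ℕ) (·≤·)).mpr hv, by simp⟩
  have := List.length_pos_iff.mpr (List.ne_nil_of_mem this)
  omega

lemma sort_getD_rk {A : Finset ℕ} {v : ℕ} (hv : v ∈ A) :
    (A.sort (·≤·)).getD (rk A v - 1) 0 = v := by
  have hvs : v ∈ A.sort (·≤·) := (Finset.mem_sort (α := ℕ) (·≤·)).mpr hv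
  obtain ⟨j, hj, hjv⟩ := List.mem_iff_getElem.mp hvs
  have hgd : (A.sort (·≤·)).getD j 0 = v := by rw [List.getD_eq_getElem _ _ hj, hjv]
  have : rk A v = j + 1 := by
    rw [← hgd]
    exact sorted_count_le (S16.sort_sorted_lt A) j hj
  rw [this]
  simpa using hgd

/-! helper: length of filter is monotone under pointwise implication -/
lemma length_filter_mono {l : List ℕ} {p q : ℕ → Bool} (h : ∀ x ∈ l, p x → q x) :
    (l.filter p).length ≤ (l.filter q).length := by
  induction l with
  | nil => simp
  | cons x t ih =>
    have ht : ∀ y ∈ t, p y → q y := fun y hy => h y (List.mem_cons_of_mem _ hy)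
    by_cases hp : p x
    · rw [List.filter_cons_of_pos hp, List.filter_cons_of_pos (h x (List.mem_cons_self) hp)]
      simpa using ih ht
    · rw [List.filter_cons_of_neg hp]
      refine le_trans (ih ht) ?_
      by_cases hq : q x
      · rw [List.filter_cons_of_pos hq]; simp
      · rw [List.filter_cons_of_neg hq]

lemma rk_mono (A : Finset ℕ) {v v' : ℕ} (h : v ≤ v') : rk A v ≤ rk A v' := by
  unfold rk
  refine length_filter_mono ?_
  intro x _ hx
  simp only [decide_eq_true_eq] at hx ⊢
  omega

lemma rk_succ_of_mem {A : Finset ℕ} {i : ℕ} (h1 : i ∈ A) (h2 : i+1 ∈ A) :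
    rk A (i+1) = rk A i + 1 := by
  unfold rk
  have hperm : ∀ (p : ℕ → Bool), ((A.sort (·≤·)).filter p).length
      = (A.filter (fun x => p x = true)).card := by
    intro p
    have h1 : ((A.sort (·≤·)).filter p).Perm ((A.filter (fun x => p x = true)).toList) := by
      refine (List.perm_ext_iff_of_nodup ((Finset.sort_nodup _ _).filter _)
        (Finset.nodup_toList _)).mpr ?_
      intro a
      simp [List.mem_filter, Finset.mem_toList, Finset.mem_filter, Finset.mem_sort]
    rw [h1.length_eq, Finset.length_toList]
  rw [hperm, hperm]
  have : A.filter (fun x => (decide (x ≤ i+1)) = true)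
      = A.filter (fun x => (decide (x ≤ i)) = true) ∪ {i+1} := by
    ext a
    simp only [Finset.mem_filter, Finset.mem_union, Finset.mem_singleton, decide_eq_true_eq]
    constructor
    · rintro ⟨ha, hle⟩
      by_cases h : a = i + 1
      · right; exact h
      · left; exact ⟨ha, by omega⟩
    · rintro (⟨ha, hle⟩ | rfl)
      · exact ⟨ha, by omega⟩
      · exact ⟨h2, le_rfl⟩
  rw [this, Finset.card_union_of_disjoint
    (Finset.disjoint_left.mpr (by intro a ha hb; simp at ha hb; omega))]
  simp

/-! ### the sorted interval -/

lemma sort_Icc_eq_range' (N : ℕ) : (Finset.Icc 1 N).sort (·≤·) = List.range' 1 N := by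
  haveI : IsAntisymm ℕ (·<·) := ⟨fun a b h1 h2 => absurd h2 (not_lt_of_gt h1)⟩
  refine S16.eq_of_perm_of_sorted (r := (·<·)) ?_ (S16.sort_sorted_lt _) ?_
  · refine (List.perm_ext_iff_of_nodup (Finset.sort_nodup _ _) (List.nodup_range')).mpr ?_
    intro a
    rw [Finset.mem_sort, Finset.mem_Icc, List.mem_range'_1]
    omega
  · exact List.pairwise_lt_range'

lemma count_range'_le (N v : ℕ) :
    ((List.range' 1 N).filter (fun x => x ≤ v)).length = min v N := by
  induction N with
  | zero => simp
  | succ N ih =>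
    rw [List.range'_1_concat, List.filter_append, List.length_append, ih]
    by_cases h : N + 1 ≤ v
    · rw [List.filter_cons_of_pos (by simp only [decide_eq_true_eq]; omega)]
      simp only [List.filter_nil, List.length_cons, List.length_nil]
      omega
    · rw [List.filter_cons_of_neg (by simp only [decide_eq_true_eq]; omega)]
      simp only [List.filter_nil, List.length_nil]
      omega

section complement

variable {N k : ℕ} {S : Finset ℕ}

lemma compl_card (hS : S ⊆ Finset.Icc 1 N) (hcard : S.card = k) :
    (Finset.Icc 1 N \ S).card = N - k := by
  rw [Finset.card_sdiff_of_subset hS, Nat.card_Icc, hcard]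
  omega

lemma union_compl (hS : S ⊆ Finset.Icc 1 N) : S ∪ (Finset.Icc 1 N \ S) = Finset.Icc 1 N := by
  rw [Finset.union_sdiff_of_subset hS]

lemma sorts_perm_range' (hS : S ⊆ Finset.Icc 1 N) :
    (S.sort (·≤·) ++ ((Finset.Icc 1 N \ S).sort (·≤·))).Perm (List.range' 1 N) := by
  refine (List.perm_ext_iff_of_nodup ?_ (List.nodup_range')).mpr ?_
  · rw [List.nodup_append]
    refine ⟨Finset.sort_nodup _ _, Finset.sort_nodup _ _, ?_⟩
    intro a ha _ hb rfl
    rw [Finset.mem_sort] at ha hb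
    simp only [Finset.mem_sdiff] at hb
    exact hb.2 ha
  · intro a
    simp only [List.mem_append, Finset.mem_sort, Finset.mem_sdiff, Finset.mem_Icc,
      List.mem_range'_1]
    constructor
    · rintro (h | ⟨h, -⟩)
      · have := hS h; rw [Finset.mem_Icc] at this; omega
      · omega
    · intro h
      by_cases hmem : a ∈ S
      · exact Or.inl hmem
      · exact Or.inr ⟨⟨by omega, by omega⟩, hmem⟩

lemma rk_add_rk (hS : S ⊆ Finset.Icc 1 N) {v : ℕ} (h1 : 1 ≤ v) (h2 : v ≤ N) :
    rk S v + rk (Finset.Icc 1 N \ S) v = v := by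
  unfold rk
  rw [← List.length_append, ← List.filter_append]
  have hperm := (sorts_perm_range' hS).filter (fun x => decide (x ≤ v))
  rw [hperm.length_eq, count_range'_le]
  omega

end complement

/-! ### the pattern set of a subset -/

def EA (N : ℕ) (D1 D2 : Finset ℕ) (S : Finset ℕ) : Finset ℕ :=
  (Finset.Icc 1 (N-1)).filter (fun i =>
    if i+1 ∈ S then (if i ∈ S then rk S i ∈ D1 else True)
    else (if i ∈ S then False else rk ((Finset.Icc 1 N) \ S) i ∈ D2))

lemma EA_subset (N : ℕ) (D1 D2 S : Finset ℕ) : EA N D1 D2 S ⊆ Finset.Icc 1 (N-1) :=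
  Finset.filter_subset _ _

lemma EA_card_le (N : ℕ) (D1 D2 S : Finset ℕ) : (EA N D1 D2 S).card ≤ N - 1 := by
  calc (EA N D1 D2 S).card ≤ (Finset.Icc 1 (N-1)).card := Finset.card_le_card (EA_subset _ _ _ _)
  _ = N - 1 := by rw [Nat.card_Icc]; omega

end S16

namespace S16
open Finset List

lemma mem_EA_iff {N : ℕ} {D1 D2 S : Finset ℕ} {i : ℕ} :
    i ∈ EA N D1 D2 S ↔ (1 ≤ i ∧ i ≤ N-1) ∧
      (if i+1 ∈ S then (if i ∈ S then rk S i ∈ D1 else True)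
       else (if i ∈ S then False else rk ((Finset.Icc 1 N) \ S) i ∈ D2)) := by
  rw [EA, Finset.mem_filter, Finset.mem_Icc]

lemma getD_map_at {l : List ℕ} {F : ℕ → ℕ} {j : ℕ} (hj : j < l.length) :
    (l.map F).getD j 0 = F (l.getD j 0) := by
  rw [List.getD_eq_getElem _ _ (by simpa using hj), List.getElem_map,
    List.getD_eq_getElem _ _ hj]

lemma sorted_getD_mono {A : Finset ℕ} {a b : ℕ} (hab : a ≤ b) (hb : b < A.card) :
    (A.sort (·≤·)).getD a 0 ≤ (A.sort (·≤·)).getD b 0 := by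
  rcases Nat.eq_or_lt_of_le hab with rfl | h
  · exact le_rfl
  · exact le_of_lt (sorted_getD_strictMono (S16.sort_sorted_lt A) h
      (by rwa [Finset.length_sort]))

lemma sort_no_between {A : Finset ℕ} {j : ℕ} (hj : j + 1 < A.card) {x : ℕ} (hx : x ∈ A)
    (h1 : (A.sort (·≤·)).getD j 0 < x) : (A.sort (·≤·)).getD (j+1) 0 ≤ x := by
  have hxrk := sort_getD_rk hx
  have hrk1 := rk_pos hx
  have hrkc := rk_le_card A x
  by_contra hc
  push_neg at hc
  -- x = getD (rk x - 1); compare rk x - 1 with j and j+1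
  rcases Nat.lt_or_ge (rk A x - 1) (j+1) with h | h
  · -- rk x - 1 ≤ j: x ≤ getD j, contradiction with h1
    have := sorted_getD_mono (A := A) (a := rk A x - 1) (b := j) (by omega) (by omega)
    rw [hxrk] at this
    omega
  · have := sorted_getD_mono (A := A) (a := j+1) (b := rk A x - 1) h (by omega)
    rw [hxrk] at this
    omega

section fwd

variable {N k M : ℕ} {D1 D2 : Finset ℕ} {S : Finset ℕ} {g : List ℕ}

lemma claimC (hS : S ⊆ Finset.Icc 1 N) (hg : g ∈ LabF (EA N D1 D2 S) N M)
    {v u : ℕ} (hv1 : 1 ≤ v) (hvS : v ∉ S) (hu : u ∈ S) (hvu : v < u) :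
    g.getD (u-1) 0 < g.getD (v-1) 0 := by
  have hW : u ∈ S.filter (fun x => v < x) := Finset.mem_filter.mpr ⟨hu, hvu⟩
  have hWne : (S.filter (fun x => v < x)).Nonempty := ⟨u, hW⟩
  set w := (S.filter (fun x => v < x)).min' hWne with hw
  have hwW := Finset.min'_mem _ hWne
  rw [← hw] at hwW
  have hwS : w ∈ S := (Finset.mem_filter.mp hwW).1
  have hvw : v < w := (Finset.mem_filter.mp hwW).2
  have hwu : w ≤ u := Finset.min'_le _ _ hW
  have hwN : w ≤ N := by have := hS hwS; rw [Finset.mem_Icc] at this; omega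
  have hw1 : w - 1 ∉ S := by
    intro hc
    by_cases h : w - 1 = v
    · rw [h] at hc; exact hvS hc
    · have hmem : w - 1 ∈ S.filter (fun x => v < x) := Finset.mem_filter.mpr ⟨hc, by omega⟩
      have := Finset.min'_le _ _ hmem
      omega
  have hEA : w - 1 ∈ EA N D1 D2 S := by
    rw [mem_EA_iff]
    refine ⟨⟨by omega, by omega⟩, ?_⟩
    rw [show w - 1 + 1 = w by omega, if_pos hwS, if_neg hw1]
    trivial
  have hstep := labf_step hg (i := w-1) (by omega) (by omega) hEA
  have h1 : g.getD (u-1) 0 ≤ g.getD (w-1) 0 := labf_anti hg _ _ (by omega)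
  have h2 : g.getD (w-1-1) 0 ≤ g.getD (v-1) 0 := labf_anti hg _ _ (by omega)
  omega

lemma claimD (hS : S ⊆ Finset.Icc 1 N) (hcard : S.card = k)
    (hg : g ∈ LabF (EA N D1 D2 S) N M)
    {r : ℕ} (hr1 : 1 ≤ r) (hrk : r + 1 ≤ k) (hrD : r ∈ D1) :
    g.getD ((S.sort (·≤·)).getD r 0 - 1) 0 < g.getD ((S.sort (·≤·)).getD (r-1) 0 - 1) 0 := by
  set u1 := (S.sort (·≤·)).getD (r-1) 0 with hu1
  set u2 := (S.sort (·≤·)).getD r 0 with hu2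
  have hu12 : u1 < u2 := sorted_getD_strictMono (S16.sort_sorted_lt S) (by omega)
    (by rw [Finset.length_sort, hcard]; omega)
  have hu1S : u1 ∈ S := sort_getD_mem (by omega)
  have hu2S : u2 ∈ S := sort_getD_mem (by omega)
  have hu1I : 1 ≤ u1 ∧ u1 ≤ N := by have := hS hu1S; rwa [Finset.mem_Icc] at this
  have hu2I : 1 ≤ u2 ∧ u2 ≤ N := by have := hS hu2S; rwa [Finset.mem_Icc] at this
  have hrkS : rk S u1 = r := by
    have := rk_sort_getD (A := S) (r := r-1) (by omega)
    rw [← hu1] at this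
    rw [this]; omega
  by_cases h : u2 = u1 + 1
  · have hEA : u1 ∈ EA N D1 D2 S := by
      rw [mem_EA_iff]
      refine ⟨⟨by omega, by omega⟩, ?_⟩
      rw [if_pos (by rw [← h]; exact hu2S), if_pos hu1S, hrkS]
      exact hrD
    have hstep := labf_step hg (i := u1) (by omega) (by omega) hEA
    rw [show u2 - 1 = u1 by omega]
    exact hstep
  · have hvS : u2 - 1 ∉ S := by
      intro hc
      have := sort_no_between (A := S) (j := r - 1) (by rw [hcard]; omega) hc (by rw [← hu1]; omega)
      rw [show r - 1 + 1 = r by omega, ← hu2] at this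
      omega
    have hC := claimC hS hg (v := u2 - 1) (u := u2) (by omega) hvS hu2S (by omega)
    have h2 : g.getD (u2-1-1) 0 ≤ g.getD (u1-1) 0 := labf_anti hg _ _ (by omega)
    omega

lemma claimE (hS : S ⊆ Finset.Icc 1 N) (hcard : S.card = k) (hk : k ≤ N)
    (hg : g ∈ LabF (EA N D1 D2 S) N M)
    {c : ℕ} (hc1 : 1 ≤ c) (hck : c + 1 ≤ N - k) (hcD : c ∈ D2) :
    g.getD (((Finset.Icc 1 N \ S).sort (·≤·)).getD c 0 - 1) 0
      < g.getD (((Finset.Icc 1 N \ S).sort (·≤·)).getD (c-1) 0 - 1) 0 := by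
  set T := Finset.Icc 1 N \ S with hT
  have hTcard : T.card = N - k := compl_card hS hcard
  set v1 := (T.sort (·≤·)).getD (c-1) 0 with hv1
  set v2 := (T.sort (·≤·)).getD c 0 with hv2
  have hv12 : v1 < v2 := sorted_getD_strictMono (S16.sort_sorted_lt T) (by omega)
    (by rw [Finset.length_sort, hTcard]; omega)
  have hv1T : v1 ∈ T := sort_getD_mem (by omega)
  have hv2T : v2 ∈ T := sort_getD_mem (by omega)
  have hv1I : (1 ≤ v1 ∧ v1 ≤ N) ∧ v1 ∉ S := by
    have := hv1T; rw [hT, Finset.mem_sdiff, Finset.mem_Icc] at this; exact this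
  have hv2I : (1 ≤ v2 ∧ v2 ≤ N) ∧ v2 ∉ S := by
    have := hv2T; rw [hT, Finset.mem_sdiff, Finset.mem_Icc] at this; exact this
  have hrkT : rk T v1 = c := by
    have := rk_sort_getD (A := T) (r := c-1) (by omega)
    rw [← hv1] at this
    rw [this]; omega
  by_cases h : v2 = v1 + 1
  · have hEA : v1 ∈ EA N D1 D2 S := by
      rw [mem_EA_iff]
      refine ⟨⟨by omega, by omega⟩, ?_⟩
      rw [if_neg (by rw [← h]; exact hv2I.2), if_neg hv1I.2, ← hT, hrkT]
      exact hcD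
    have hstep := labf_step hg (i := v1) (by omega) (by omega) hEA
    rw [show v2 - 1 = v1 by omega]
    exact hstep
  · have huS : v1 + 1 ∈ S := by
      by_contra hc'
      have huT : v1 + 1 ∈ T := by
        rw [hT, Finset.mem_sdiff, Finset.mem_Icc]
        exact ⟨⟨by omega, by omega⟩, hc'⟩
      have := sort_no_between (A := T) (j := c - 1) (by rw [hTcard]; omega) huT
        (by rw [← hv1]; omega)
      rw [show c - 1 + 1 = c by omega, ← hv2] at this
      omega
    have hC := claimC hS hg (v := v1) (u := v1 + 1) (by omega) hv1I.2 huS (by omega)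
    have h2 : g.getD (v2-1) 0 ≤ g.getD (v1+1-1) 0 := labf_anti hg _ _ (by omega)
    omega

/-! forward well-definedness -/

lemma fwd_mem_left (hS : S ⊆ Finset.Icc 1 N) (hcard : S.card = k)
    (hD1 : D1 ⊆ Finset.Icc 1 (k-1)) (hg : g ∈ LabF (EA N D1 D2 S) N M) :
    (S.sort (·≤·)).map (fun v => g.getD (v-1) 0) ∈ LabF D1 k M := by
  rw [mem_LabF]
  have hlen : (S.sort (·≤·)).length = k := by rw [Finset.length_sort, hcard]
  refine ⟨⟨by simp [hlen], ?_⟩, ?_⟩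
  · intro x hx
    simp only [List.mem_map] at hx
    obtain ⟨v, -, rfl⟩ := hx
    exact labf_getD_le hg _
  · intro i hi
    simp only [Finset.mem_Icc] at hi
    rw [getD_map_at (by omega), getD_map_at (by omega)]
    constructor
    · -- weak
      refine labf_anti hg _ _ ?_
      have := sorted_getD_strictMono (S16.sort_sorted_lt S) (a := i-1) (b := i)
        (by omega) (by rw [hlen]; omega)
      omega
    · intro hiD
      exact claimD hS hcard hg (by omega) (by omega) hiD

lemma fwd_mem_right (hS : S ⊆ Finset.Icc 1 N) (hcard : S.card = k) (hk : k ≤ N)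
    (hD2 : D2 ⊆ Finset.Icc 1 (N-k-1)) (hg : g ∈ LabF (EA N D1 D2 S) N M) :
    ((Finset.Icc 1 N \ S).sort (·≤·)).map (fun v => g.getD (v-1) 0) ∈ LabF D2 (N-k) M := by
  rw [mem_LabF]
  have hTcard : (Finset.Icc 1 N \ S).card = N - k := compl_card hS hcard
  have hlen : ((Finset.Icc 1 N \ S).sort (·≤·)).length = N-k := by
    rw [Finset.length_sort, hTcard]
  refine ⟨⟨by simp [hlen], ?_⟩, ?_⟩
  · intro x hx
    simp only [List.mem_map] at hx
    obtain ⟨v, -, rfl⟩ := hx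
    exact labf_getD_le hg _
  · intro i hi
    simp only [Finset.mem_Icc] at hi
    rw [getD_map_at (by omega), getD_map_at (by omega)]
    constructor
    · refine labf_anti hg _ _ ?_
      have := sorted_getD_strictMono (S16.sort_sorted_lt (Finset.Icc 1 N \ S))
        (a := i-1) (b := i) (by omega) (by rw [hlen]; omega)
      omega
    · intro hiD
      exact claimE hS hcard hk hg (by omega) (by omega) hiD

/-! the weight identity -/

lemma fwd_weight (hS : S ⊆ Finset.Icc 1 N) (hg : g ∈ LabF (EA N D1 D2 S) N M) :
    g.sum = ((S.sort (·≤·)).map (fun v => g.getD (v-1) 0)).sum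
      + (((Finset.Icc 1 N \ S).sort (·≤·)).map (fun v => g.getD (v-1) 0)).sum := by
  rw [← List.sum_append, ← List.map_append]
  have hperm := (sorts_perm_range' hS).map (fun v => g.getD (v-1) 0)
  rw [hperm.sum_eq, range'_map_getD (labf_length hg)]

end fwd

end S16
namespace S16
open Finset List

section leftinv

variable {N k M : ℕ} {D1 D2 : Finset ℕ} {S : Finset ℕ} {g : List ℕ}

lemma image_sort_getD (hcard : S.card = k) :
    (Finset.Icc 1 k).image (fun r => (S.sort (·≤·)).getD (r-1) 0) = S := by
  ext v
  rw [Finset.mem_image]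
  constructor
  · rintro ⟨r, hr, rfl⟩
    rw [Finset.mem_Icc] at hr
    exact sort_getD_mem (by omega)
  · intro hv
    refine ⟨rk S v, Finset.mem_Icc.mpr ⟨rk_pos hv, by rw [← hcard]; exact rk_le_card S v⟩,
      sort_getD_rk hv⟩

lemma fwd_S_eq (hS : S ⊆ Finset.Icc 1 N) (hcard : S.card = k)
    (hg : g ∈ LabF (EA N D1 D2 S) N M) :
    (Finset.Icc 1 k).image (fun r => r +
        ((((Finset.Icc 1 N \ S).sort (·≤·)).map (fun v => g.getD (v-1) 0)).filter
          (fun y => (((S.sort (·≤·)).map (fun v => g.getD (v-1) 0)).getD (r-1) 0) < y)).length)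
      = S := by
  rw [show ((Finset.Icc 1 k).image (fun r => r +
        ((((Finset.Icc 1 N \ S).sort (·≤·)).map (fun v => g.getD (v-1) 0)).filter
          (fun y => (((S.sort (·≤·)).map (fun v => g.getD (v-1) 0)).getD (r-1) 0) < y)).length))
      = (Finset.Icc 1 k).image (fun r => (S.sort (·≤·)).getD (r-1) 0) from ?_]
  · exact image_sort_getD hcard
  refine Finset.image_congr ?_
  intro r hr
  simp only [Finset.coe_Icc, Set.mem_Icc] at hr
  beta_reduce
  set u := (S.sort (·≤·)).getD (r-1) 0 with hu
  have huS : u ∈ S := sort_getD_mem (by omega)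
  have huI : 1 ≤ u ∧ u ≤ N := by have := hS huS; rwa [Finset.mem_Icc] at this
  have hgetD : ((S.sort (·≤·)).map (fun v => g.getD (v-1) 0)).getD (r-1) 0 = g.getD (u-1) 0 := by
    rw [getD_map_at (by rw [Finset.length_sort, hcard]; omega)]
  rw [hgetD]
  rw [List.filter_map, List.length_map]
  have hcongr : ((Finset.Icc 1 N \ S).sort (·≤·)).filter
      ((fun y => decide (g.getD (u-1) 0 < y)) ∘ (fun v => g.getD (v-1) 0))
      = ((Finset.Icc 1 N \ S).sort (·≤·)).filter (fun v => decide (v ≤ u)) := by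
    refine List.filter_congr ?_
    intro v hv
    rw [Finset.mem_sort] at hv
    rw [Finset.mem_sdiff, Finset.mem_Icc] at hv
    simp only [Function.comp_apply, decide_eq_decide]
    constructor
    · intro hlt
      by_contra hge
      push_neg at hge
      have : g.getD (v-1) 0 ≤ g.getD (u-1) 0 := labf_anti hg _ _ (by omega)
      omega
    · intro hle
      have hne : v ≠ u := fun hc => hv.2 (hc ▸ huS)
      exact claimC hS hg (by omega) hv.2 huS (by omega)
  rw [hcongr]
  have hrk : ((Finset.Icc 1 N \ S).sort (·≤·)).filter (fun v => decide (v ≤ u))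
      = ((Finset.Icc 1 N \ S).sort (·≤·)).filter (fun v => v ≤ u) := rfl
  have : (((Finset.Icc 1 N \ S).sort (·≤·)).filter (fun v => decide (v ≤ u))).length
      = rk (Finset.Icc 1 N \ S) u := rfl
  rw [this]
  have hsum := rk_add_rk hS (v := u) (by omega) (by omega)
  have hrkS : rk S u = r := by
    have := rk_sort_getD (A := S) (r := r-1) (by rw [hcard]; omega)
    rw [← hu] at this
    rw [this]; omega
  omega

lemma labf_sorted_desc {E : Finset ℕ} {L : ℕ} (hg : g ∈ LabF E L M) :
    List.Pairwise (fun a b : ℕ => b ≤ a) g := by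
  rw [List.pairwise_iff_getElem]
  intro i j hi hj hij
  have := labf_anti hg i j (by omega)
  rw [List.getD_eq_getElem _ _ hi, List.getD_eq_getElem _ _ hj] at this
  exact this

lemma mergeSort_desc_sorted (l : List ℕ) :
    List.Pairwise (fun a b : ℕ => b ≤ a) (l.mergeSort (fun a b => decide (b ≤ a))) := by
  have h := List.pairwise_mergeSort (le := fun a b : ℕ => decide (b ≤ a))
    (by intro a b c h1 h2; simp only [decide_eq_true_eq] at h1 h2 ⊢; omega)
    (by intro a b; simp only [Bool.or_eq_true, decide_eq_true_eq]; omega)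
    l
  exact h.imp (by intro a b hab; simpa using hab)

lemma fwd_g_eq (hS : S ⊆ Finset.Icc 1 N) (hg : g ∈ LabF (EA N D1 D2 S) N M) :
    (((S.sort (·≤·)).map (fun v => g.getD (v-1) 0)
        ++ ((Finset.Icc 1 N \ S).sort (·≤·)).map (fun v => g.getD (v-1) 0)).mergeSort
        (fun a b => decide (b ≤ a))) = g := by
  haveI : IsAntisymm ℕ (fun a b : ℕ => b ≤ a) := ⟨fun a b h1 h2 => le_antisymm h2 h1⟩
  refine S16.eq_of_perm_of_sorted (r := fun a b : ℕ => b ≤ a) ?_ ?_ (labf_sorted_desc hg)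
  · refine (List.mergeSort_perm _ _).trans ?_
    rw [← List.map_append]
    have hperm := (sorts_perm_range' hS).map (fun v => g.getD (v-1) 0)
    rw [range'_map_getD (labf_length hg)] at hperm
    exact hperm
  · exact mergeSort_desc_sorted _

end leftinv

end S16
namespace S16
open Finset List

def sfun (f f' : List ℕ) (r : ℕ) : ℕ := r + (f'.filter (fun y => f.getD (r-1) 0 < y)).length
def tfun (f f' : List ℕ) (c : ℕ) : ℕ := c + (f.filter (fun y => f'.getD (c-1) 0 ≤ y)).length
def S0 (k : ℕ) (f f' : List ℕ) : Finset ℕ := (Finset.Icc 1 k).image (sfun f f')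

section bwd

variable {N k M : ℕ} {D1 D2 : Finset ℕ} {f f' : List ℕ}

lemma sfun_gap (hf : f ∈ LabF D1 k M) {r r' : ℕ} (h1 : 1 ≤ r) (h : r ≤ r') :
    sfun f f' r + (r' - r) ≤ sfun f f' r' := by
  unfold sfun
  have hm : (f'.filter (fun y => f.getD (r-1) 0 < y)).length
      ≤ (f'.filter (fun y => f.getD (r'-1) 0 < y)).length := by
    refine length_filter_mono ?_
    intro x _ hx
    simp only [decide_eq_true_eq] at hx ⊢
    have := labf_anti hf (r-1) (r'-1) (by omega)
    omega
  omega

lemma sfun_lt (hf : f ∈ LabF D1 k M) {r r' : ℕ} (h1 : 1 ≤ r) (h : r < r') :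
    sfun f f' r < sfun f f' r' := by
  have := sfun_gap (f' := f') hf h1 (le_of_lt h)
  omega

lemma tfun_gap (hf' : f' ∈ LabF D2 (N-k) M) {c c' : ℕ} (h1 : 1 ≤ c) (h : c ≤ c') :
    tfun f f' c + (c' - c) ≤ tfun f f' c' := by
  unfold tfun
  have hm : (f.filter (fun y => f'.getD (c-1) 0 ≤ y)).length
      ≤ (f.filter (fun y => f'.getD (c'-1) 0 ≤ y)).length := by
    refine length_filter_mono ?_
    intro x _ hx
    simp only [decide_eq_true_eq] at hx ⊢
    have := labf_anti hf' (c-1) (c'-1) (by omega)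
    omega
  omega

lemma tfun_lt (hf' : f' ∈ LabF D2 (N-k) M) {c c' : ℕ} (h1 : 1 ≤ c) (h : c < c') :
    tfun f f' c < tfun f f' c' := by
  have := tfun_gap (f := f) hf' h1 (le_of_lt h)
  omega

lemma sfun_le_N (hf' : f' ∈ LabF D2 (N-k) M) (hk : k ≤ N) {r : ℕ} (hr : r ≤ k) :
    sfun f f' r ≤ N := by
  unfold sfun
  have := List.length_filter_le (fun y => decide (f.getD (r-1) 0 < y)) f'
  rw [labf_length hf'] at this
  omega

lemma tfun_le_N (hf : f ∈ LabF D1 k M) (hk : k ≤ N) {c : ℕ} (hc : c ≤ N-k) :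
    tfun f f' c ≤ N := by
  unfold tfun
  have := List.length_filter_le (fun y => decide (f'.getD (c-1) 0 ≤ y)) f
  rw [labf_length hf] at this
  omega

/-! the four count inequalities -/

lemma key_n_ge (hf : f ∈ LabF D1 k M) {r c : ℕ} (hr : 1 ≤ r ∧ r ≤ k)
    (h : f'.getD (c-1) 0 ≤ f.getD (r-1) 0) :
    r ≤ (f.filter (fun y => f'.getD (c-1) 0 ≤ y)).length := by
  have := (anti_filter (p := fun y => decide (f'.getD (c-1) 0 ≤ y))
    (by intro x y hxy hx; simp at hx ⊢; omega) f (labf_anti hf) (r-1)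
    (by rw [labf_length hf]; omega)).mp (by simpa using h)
  omega

lemma key_m_le (hf' : f' ∈ LabF D2 (N-k) M) {r c : ℕ} (hc : 1 ≤ c ∧ c ≤ N-k)
    (h : f'.getD (c-1) 0 ≤ f.getD (r-1) 0) :
    (f'.filter (fun y => f.getD (r-1) 0 < y)).length ≤ c - 1 := by
  have hiff := anti_filter (p := fun y => decide (f.getD (r-1) 0 < y))
    (by intro x y hxy hx; simp at hx ⊢; omega) f' (labf_anti hf') (c-1)
    (by rw [labf_length hf']; omega)
  have : ¬ ((c-1) < (f'.filter (fun y => decide (f.getD (r-1) 0 < y))).length) := by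
    rw [← hiff]
    simp only [decide_eq_true_eq]
    omega
  omega

lemma key_m_ge (hf' : f' ∈ LabF D2 (N-k) M) {r c : ℕ} (hc : 1 ≤ c ∧ c ≤ N-k)
    (h : f.getD (r-1) 0 < f'.getD (c-1) 0) :
    c ≤ (f'.filter (fun y => f.getD (r-1) 0 < y)).length := by
  have := (anti_filter (p := fun y => decide (f.getD (r-1) 0 < y))
    (by intro x y hxy hx; simp at hx ⊢; omega) f' (labf_anti hf') (c-1)
    (by rw [labf_length hf']; omega)).mp (by simpa using h)
  omega

lemma key_n_le (hf : f ∈ LabF D1 k M) {r c : ℕ} (hr : 1 ≤ r ∧ r ≤ k)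
    (h : f.getD (r-1) 0 < f'.getD (c-1) 0) :
    (f.filter (fun y => f'.getD (c-1) 0 ≤ y)).length ≤ r - 1 := by
  have hiff := anti_filter (p := fun y => decide (f'.getD (c-1) 0 ≤ y))
    (by intro x y hxy hx; simp at hx ⊢; omega) f (labf_anti hf) (r-1)
    (by rw [labf_length hf]; omega)
  have : ¬ ((r-1) < (f.filter (fun y => decide (f'.getD (c-1) 0 ≤ y))).length) := by
    rw [← hiff]
    simp only [decide_eq_true_eq]
    omega
  omega

lemma st_disjoint (hf : f ∈ LabF D1 k M) (hf' : f' ∈ LabF D2 (N-k) M)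
    {r c : ℕ} (hr : 1 ≤ r ∧ r ≤ k) (hc : 1 ≤ c ∧ c ≤ N-k) :
    sfun f f' r ≠ tfun f f' c := by
  by_cases h : f'.getD (c-1) 0 ≤ f.getD (r-1) 0
  · have h1 := key_n_ge (f' := f') hf hr h
    have h2 := key_m_le hf' hc h
    unfold sfun tfun
    omega
  · push_neg at h
    have h1 := key_m_ge hf' hc h
    have h2 := key_n_le (f' := f') hf hr h
    unfold sfun tfun
    omega

/-! structure of S0 and its complement -/

lemma card_S0 (hf : f ∈ LabF D1 k M) : (S0 k f f').card = k := by
  rw [S0, Finset.card_image_of_injOn, Nat.card_Icc]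
  · omega
  · intro a ha b hb hab
    simp only [Finset.coe_Icc, Set.mem_Icc] at ha hb
    by_contra hne
    rcases Nat.lt_or_ge a b with h | h
    · have := sfun_lt (f' := f') hf ha.1 h; omega
    · have : b < a := by omega
      have := sfun_lt (f' := f') hf hb.1 this; omega

lemma S0_subset (hf' : f' ∈ LabF D2 (N-k) M) (hk : k ≤ N) : S0 k f f' ⊆ Finset.Icc 1 N := by
  intro v hv
  rw [S0, Finset.mem_image] at hv
  obtain ⟨r, hr, rfl⟩ := hv
  rw [Finset.mem_Icc] at hr
  rw [Finset.mem_Icc]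
  refine ⟨by unfold sfun; omega, sfun_le_N hf' hk hr.2⟩

lemma card_T0img (hf' : f' ∈ LabF D2 (N-k) M) :
    ((Finset.Icc 1 (N-k)).image (tfun f f')).card = N - k := by
  rw [Finset.card_image_of_injOn, Nat.card_Icc]
  · omega
  · intro a ha b hb hab
    simp only [Finset.coe_Icc, Set.mem_Icc] at ha hb
    by_contra hne
    rcases Nat.lt_or_ge a b with h | h
    · have := tfun_lt (f := f) hf' ha.1 h; omega
    · have : b < a := by omega
      have := tfun_lt (f := f) hf' hb.1 this; omega

lemma T0_eq (hf : f ∈ LabF D1 k M) (hf' : f' ∈ LabF D2 (N-k) M) (hk : k ≤ N) :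
    Finset.Icc 1 N \ S0 k f f' = (Finset.Icc 1 (N-k)).image (tfun f f') := by
  have hdisj : Disjoint (S0 k f f') ((Finset.Icc 1 (N-k)).image (tfun f f')) := by
    rw [Finset.disjoint_left]
    intro a ha hb
    rw [S0, Finset.mem_image] at ha
    rw [Finset.mem_image] at hb
    obtain ⟨r, hr, rfl⟩ := ha
    obtain ⟨c, hc, hcc⟩ := hb
    rw [Finset.mem_Icc] at hr hc
    exact st_disjoint hf hf' hr hc hcc.symm
  have hsub : S0 k f f' ∪ (Finset.Icc 1 (N-k)).image (tfun f f') ⊆ Finset.Icc 1 N := by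
    refine Finset.union_subset (S0_subset hf' hk) ?_
    intro v hv
    rw [Finset.mem_image] at hv
    obtain ⟨c, hc, rfl⟩ := hv
    rw [Finset.mem_Icc] at hc
    rw [Finset.mem_Icc]
    refine ⟨by unfold tfun; omega, tfun_le_N hf hk hc.2⟩
  have hunion : S0 k f f' ∪ (Finset.Icc 1 (N-k)).image (tfun f f') = Finset.Icc 1 N := by
    refine Finset.eq_of_subset_of_card_le hsub ?_
    rw [Finset.card_union_of_disjoint hdisj, card_S0 hf, card_T0img hf', Nat.card_Icc]
    omega
  rw [← hunion, Finset.union_sdiff_cancel_left hdisj]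

lemma sort_image_of_mono {k : ℕ} {ff : ℕ → ℕ}
    (hmono : ∀ r r', 1 ≤ r → r < r' → r' ≤ k → ff r < ff r') :
    ((Finset.Icc 1 k).image ff).sort (·≤·) = (List.range' 1 k).map ff := by
  haveI : IsAntisymm ℕ (·<·) := ⟨fun a b h1 h2 => absurd h2 (not_lt_of_gt h1)⟩
  have hsorted : List.Pairwise (·<·) ((List.range' 1 k).map ff) := by
    rw [List.pairwise_iff_getElem]
    intro i j hi hj hij
    simp only [List.length_map, List.length_range'] at hi hj
    simp only [List.getElem_map, List.getElem_range']
    exact hmono _ _ (by omega) (by omega) (by omega)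
  refine S16.eq_of_perm_of_sorted (r := (·<·)) ?_ (S16.sort_sorted_lt _) hsorted
  have hnodup : ((List.range' 1 k).map ff).Nodup :=
    List.Pairwise.imp (fun h => Nat.ne_of_lt h) hsorted
  refine (List.perm_ext_iff_of_nodup (Finset.sort_nodup _ _) hnodup).mpr ?_
  · intro a
    rw [Finset.mem_sort, Finset.mem_image, List.mem_map]
    constructor
    · rintro ⟨r, hr, rfl⟩
      rw [Finset.mem_Icc] at hr
      exact ⟨r, by rw [List.mem_range'_1]; omega, rfl⟩
    · rintro ⟨r, hr, rfl⟩
      rw [List.mem_range'_1] at hr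
      exact ⟨r, Finset.mem_Icc.mpr (by omega), rfl⟩

lemma S0_sort (hf : f ∈ LabF D1 k M) :
    (S0 k f f').sort (·≤·) = (List.range' 1 k).map (sfun f f') := by
  rw [S0]
  exact sort_image_of_mono (fun r r' h1 h2 _ => sfun_lt hf h1 h2)

lemma T0_sort (hf : f ∈ LabF D1 k M) (hf' : f' ∈ LabF D2 (N-k) M) (hk : k ≤ N) :
    ((Finset.Icc 1 N \ S0 k f f').sort (·≤·)) = (List.range' 1 (N-k)).map (tfun f f') := by
  rw [T0_eq hf hf' hk]
  exact sort_image_of_mono (fun c c' h1 h2 _ => tfun_lt hf' h1 h2)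

lemma getD_range'_map {L j : ℕ} {F : ℕ → ℕ} (hj : 1 ≤ j) (hjL : j ≤ L) :
    ((List.range' 1 L).map F).getD (j-1) 0 = F j := by
  rw [getD_map_at (by simp; omega)]
  congr 1
  rw [List.getD_eq_getElem _ _ (by simp; omega), List.getElem_range']
  omega

lemma rk_S0 (hf : f ∈ LabF D1 k M) {r : ℕ} (hr : 1 ≤ r ∧ r ≤ k) :
    rk (S0 k f f') (sfun f f' r) = r := by
  have h1 := rk_sort_getD (A := S0 k f f') (r := r-1) (by rw [card_S0 hf]; omega)
  rw [S0_sort hf, getD_range'_map hr.1 hr.2] at h1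
  rw [h1]
  omega

lemma rk_T0 (hf : f ∈ LabF D1 k M) (hf' : f' ∈ LabF D2 (N-k) M) (hk : k ≤ N)
    {c : ℕ} (hc : 1 ≤ c ∧ c ≤ N-k) :
    rk (Finset.Icc 1 N \ S0 k f f') (tfun f f' c) = c := by
  have hcards : (Finset.Icc 1 N \ S0 k f f').card = N - k := by
    rw [T0_eq hf hf' hk]
    exact card_T0img hf'
  have h1 := rk_sort_getD (A := Finset.Icc 1 N \ S0 k f f') (r := c-1)
    (by rw [hcards]; omega)
  rw [T0_sort hf hf' hk, getD_range'_map hc.1 hc.2] at h1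
  rw [h1]
  omega

end bwd

end S16
namespace S16
open Finset List

section bwd2

variable {N k M : ℕ} {D1 D2 : Finset ℕ} {f f' : List ℕ}

lemma hcount (f f' : List ℕ) (p : ℕ → Bool) :
    (((f ++ f').mergeSort (fun a b => decide (b ≤ a))).filter p).length
      = (f.filter p).length + (f'.filter p).length := by
  rw [((List.mergeSort_perm (f++f') _).filter p).length_eq, List.filter_append,
    List.length_append]

lemma pairwise_desc_getD_anti {l : List ℕ} (h : List.Pairwise (fun a b : ℕ => b ≤ a) l) :
    ∀ a b, a ≤ b → l.getD b 0 ≤ l.getD a 0 := by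
  intro a b hab
  by_cases hb : b < l.length
  · rcases Nat.eq_or_lt_of_le hab with rfl | hlt
    · exact le_rfl
    · rw [List.getD_eq_getElem _ _ hb, List.getD_eq_getElem _ _ (by omega)]
      exact List.pairwise_iff_getElem.mp h a b (by omega) hb hlt
  · rw [List.getD_eq_default _ _ (by omega)]
    exact Nat.zero_le _

lemma hval_s (hf : f ∈ LabF D1 k M) (hf' : f' ∈ LabF D2 (N-k) M)
    {r : ℕ} (hr : 1 ≤ r ∧ r ≤ k) :
    ((f ++ f').mergeSort (fun a b => decide (b ≤ a))).getD (sfun f f' r - 1) 0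
      = f.getD (r-1) 0 := by
  have hsfun : sfun f f' r = r + (f'.filter (fun y => decide (f.getD (r-1) 0 < y))).length := rfl
  refine sorted_desc_getD (pairwise_desc_getD_anti (mergeSort_desc_sorted _)) ?_ ?_
  · rw [hcount]
    have h1 : (f.filter (fun y => decide (f.getD (r-1) 0 < y))).length ≤ r - 1 := by
      have hiff := anti_filter (p := fun y => decide (f.getD (r-1) 0 < y))
        (by intro x y hxy hx; simp at hx ⊢; omega) f (labf_anti hf) (r-1)
        (by rw [labf_length hf]; omega)
      have : ¬ ((r-1) < (f.filter (fun y => decide (f.getD (r-1) 0 < y))).length) := by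
        rw [← hiff]; simp
      omega
    omega
  · rw [hcount]
    have h3 : r ≤ (f.filter (fun y => decide (f.getD (r-1) 0 ≤ y))).length := by
      have hiff := anti_filter (p := fun y => decide (f.getD (r-1) 0 ≤ y))
        (by intro x y hxy hx; simp at hx ⊢; omega) f (labf_anti hf) (r-1)
        (by rw [labf_length hf]; omega)
      have := hiff.mp (by simp)
      omega
    have h4 : (f'.filter (fun y => decide (f.getD (r-1) 0 < y))).length
        ≤ (f'.filter (fun y => decide (f.getD (r-1) 0 ≤ y))).length := by
      refine length_filter_mono ?_
      intro x _ hx; simp at hx ⊢; omega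
    omega

lemma hval_t (hf : f ∈ LabF D1 k M) (hf' : f' ∈ LabF D2 (N-k) M)
    {c : ℕ} (hc : 1 ≤ c ∧ c ≤ N-k) :
    ((f ++ f').mergeSort (fun a b => decide (b ≤ a))).getD (tfun f f' c - 1) 0
      = f'.getD (c-1) 0 := by
  have htfun : tfun f f' c = c + (f.filter (fun y => decide (f'.getD (c-1) 0 ≤ y))).length := rfl
  refine sorted_desc_getD (pairwise_desc_getD_anti (mergeSort_desc_sorted _)) ?_ ?_
  · rw [hcount]
    have h1 : (f'.filter (fun y => decide (f'.getD (c-1) 0 < y))).length ≤ c - 1 := by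
      have hiff := anti_filter (p := fun y => decide (f'.getD (c-1) 0 < y))
        (by intro x y hxy hx; simp at hx ⊢; omega) f' (labf_anti hf') (c-1)
        (by rw [labf_length hf']; omega)
      have : ¬ ((c-1) < (f'.filter (fun y => decide (f'.getD (c-1) 0 < y))).length) := by
        rw [← hiff]; simp
      omega
    have h2 : (f.filter (fun y => decide (f'.getD (c-1) 0 < y))).length
        ≤ (f.filter (fun y => decide (f'.getD (c-1) 0 ≤ y))).length := by
      refine length_filter_mono ?_
      intro x _ hx; simp at hx ⊢; omega
    omega
  · rw [hcount]
    have h3 : c ≤ (f'.filter (fun y => decide (f'.getD (c-1) 0 ≤ y))).length := by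
      have hiff := anti_filter (p := fun y => decide (f'.getD (c-1) 0 ≤ y))
        (by intro x y hxy hx; simp at hx ⊢; omega) f' (labf_anti hf') (c-1)
        (by rw [labf_length hf']; omega)
      have := hiff.mp (by simp)
      omega
    omega

lemma mem_S0_elim {v : ℕ} (hv : v ∈ S0 k f f') :
    ∃ r, (1 ≤ r ∧ r ≤ k) ∧ sfun f f' r = v := by
  rw [S0, Finset.mem_image] at hv
  obtain ⟨r, hr, rfl⟩ := hv
  exact ⟨r, Finset.mem_Icc.mp hr, rfl⟩

lemma mem_T0_elim (hf : f ∈ LabF D1 k M) (hf' : f' ∈ LabF D2 (N-k) M) (hk : k ≤ N)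
    {v : ℕ} (h1 : 1 ≤ v) (h2 : v ≤ N) (hv : v ∉ S0 k f f') :
    ∃ c, (1 ≤ c ∧ c ≤ N-k) ∧ tfun f f' c = v := by
  have : v ∈ Finset.Icc 1 N \ S0 k f f' := by
    rw [Finset.mem_sdiff, Finset.mem_Icc]
    exact ⟨⟨h1, h2⟩, hv⟩
  rw [T0_eq hf hf' hk, Finset.mem_image] at this
  obtain ⟨c, hc, rfl⟩ := this
  exact ⟨c, Finset.mem_Icc.mp hc, rfl⟩

lemma h_mem (hf : f ∈ LabF D1 k M) (hf' : f' ∈ LabF D2 (N-k) M) (hk : k ≤ N)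
    (hD1 : D1 ⊆ Finset.Icc 1 (k-1)) (hD2 : D2 ⊆ Finset.Icc 1 (N-k-1)) :
    (f ++ f').mergeSort (fun a b => decide (b ≤ a)) ∈ LabF (EA N D1 D2 (S0 k f f')) N M := by
  rw [mem_LabF]
  have hlen : ((f++f').mergeSort (fun a b => decide (b ≤ a))).length = N := by
    rw [List.length_mergeSort, List.length_append, labf_length hf, labf_length hf']
    omega
  refine ⟨⟨hlen, ?_⟩, ?_⟩
  · intro x hx
    have hx2 : x ∈ f ++ f' := (List.mergeSort_perm _ _).subset hx
    rcases List.mem_append.mp hx2 with h | h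
    · exact (mem_LabF.mp hf).1.2 x h
    · exact (mem_LabF.mp hf').1.2 x h
  · intro i hi
    rw [Finset.mem_Icc] at hi
    refine ⟨pairwise_desc_getD_anti (mergeSort_desc_sorted _) _ _ (by omega), ?_⟩
    intro hEA
    by_cases h2 : i+1 ∈ S0 k f f' <;> by_cases h1 : i ∈ S0 k f f'
    · -- both in S0
      obtain ⟨r, hr, hsr⟩ := mem_S0_elim h1
      obtain ⟨r', hr', hsr'⟩ := mem_S0_elim h2
      have hrr' : r' = r + 1 := by
        have hlt : r < r' := by
          by_contra hge
          push_neg at hge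
          rcases Nat.eq_or_lt_of_le hge with rfl | hlt2
          · omega
          · have := sfun_lt (f' := f') hf hr'.1 hlt2
            omega
        have := sfun_gap (f' := f') hf hr.1 (le_of_lt hlt)
        omega
      rw [mem_EA_iff, if_pos h2, if_pos h1] at hEA
      have hrD1 : rk (S0 k f f') i ∈ D1 := hEA.2
      rw [← hsr, rk_S0 hf hr] at hrD1
      have hrb : r ≤ k - 1 := by
        have := hD1 hrD1; rw [Finset.mem_Icc] at this; omega
      have hstep := labf_step hf (i := r) hr.1 hrb hrD1
      have e1 := hval_s (f' := f') hf hf' (r := r') ⟨by omega, hr'.2⟩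
      rw [hsr'] at e1
      simp only [Nat.add_sub_cancel] at e1
      have e2 := hval_s (f' := f') hf hf' (r := r) hr
      rw [hsr] at e2
      rw [e1, e2, hrr']
      simpa using hstep
    · -- i ∉ S0, i+1 ∈ S0 : always strict
      obtain ⟨c, hc, htc⟩ := mem_T0_elim hf hf' hk (by omega) (by omega) h1
      obtain ⟨r, hr, hsr⟩ := mem_S0_elim h2
      have hkey : f.getD (r-1) 0 < f'.getD (c-1) 0 := by
        by_contra hge
        push_neg at hge
        have ha := key_n_ge (f' := f') hf hr hge
        have hb := key_m_le hf' hc hge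
        have e1 : sfun f f' r = r + (f'.filter (fun y => decide (f.getD (r-1) 0 < y))).length := rfl
        have e2 : tfun f f' c = c + (f.filter (fun y => decide (f'.getD (c-1) 0 ≤ y))).length := rfl
        omega
      have e1 := hval_s (f' := f') hf hf' (r := r) hr
      rw [hsr] at e1
      simp only [Nat.add_sub_cancel] at e1
      have e2 := hval_t hf hf' (c := c) hc
      rw [htc] at e2
      rw [e1, e2]
      exact hkey
    · -- i ∈ S0, i+1 ∉ S0 : EA condition is False
      rw [mem_EA_iff, if_neg h2, if_pos h1] at hEA
      exact hEA.2.elim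
    · -- both not in S0
      obtain ⟨c, hc, htc⟩ := mem_T0_elim hf hf' hk (by omega) (by omega) h1
      obtain ⟨c', hc', htc'⟩ := mem_T0_elim hf hf' hk (by omega) (by omega) h2
      have hcc' : c' = c + 1 := by
        have hlt : c < c' := by
          by_contra hge
          push_neg at hge
          rcases Nat.eq_or_lt_of_le hge with rfl | hlt2
          · omega
          · have := tfun_lt (f := f) hf' hc'.1 hlt2
            omega
        have := tfun_gap (f := f) hf' hc.1 (le_of_lt hlt)
        omega
      rw [mem_EA_iff, if_neg h2, if_neg h1] at hEA
      have hcD2 : rk (Finset.Icc 1 N \ S0 k f f') i ∈ D2 := hEA.2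
      rw [← htc, rk_T0 hf hf' hk hc] at hcD2
      have hcb : c ≤ N - k - 1 := by
        have := hD2 hcD2; rw [Finset.mem_Icc] at this; omega
      have hstep := labf_step hf' (i := c) hc.1 hcb hcD2
      have e1 := hval_t hf hf' (c := c') ⟨by omega, hc'.2⟩
      rw [htc'] at e1
      simp only [Nat.add_sub_cancel] at e1
      have e2 := hval_t hf hf' (c := c) hc
      rw [htc] at e2
      rw [e1, e2, hcc']
      simpa using hstep

lemma bwd_fst (hf : f ∈ LabF D1 k M) (hf' : f' ∈ LabF D2 (N-k) M) :
    ((S0 k f f').sort (·≤·)).map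
        (fun v => ((f ++ f').mergeSort (fun a b => decide (b ≤ a))).getD (v-1) 0) = f := by
  rw [S0_sort hf, List.map_map]
  have hstep : ∀ r ∈ List.range' 1 k,
      ((fun v => ((f ++ f').mergeSort (fun a b => decide (b ≤ a))).getD (v-1) 0)
        ∘ sfun f f') r = f.getD (r-1) 0 := by
    intro r hr
    rw [List.mem_range'_1] at hr
    simp only [Function.comp_apply]
    exact hval_s hf hf' ⟨hr.1, by omega⟩
  rw [List.map_congr_left hstep, range'_map_getD (labf_length hf)]

lemma bwd_snd (hf : f ∈ LabF D1 k M) (hf' : f' ∈ LabF D2 (N-k) M) (hk : k ≤ N) :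
    ((Finset.Icc 1 N \ S0 k f f').sort (·≤·)).map
        (fun v => ((f ++ f').mergeSort (fun a b => decide (b ≤ a))).getD (v-1) 0) = f' := by
  rw [T0_sort hf hf' hk, List.map_map]
  have hstep : ∀ c ∈ List.range' 1 (N-k),
      ((fun v => ((f ++ f').mergeSort (fun a b => decide (b ≤ a))).getD (v-1) 0)
        ∘ tfun f f') c = f'.getD (c-1) 0 := by
    intro c hcmem
    rw [List.mem_range'_1] at hcmem
    simp only [Function.comp_apply]
    exact hval_t hf hf' ⟨hcmem.1, by omega⟩
  rw [List.map_congr_left hstep, range'_map_getD (labf_length hf')]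

end bwd2

end S16
namespace S16
open Finset List

theorem merge' {N k M : ℕ} {D1 D2 : Finset ℕ} (hk : k ≤ N)
    (hD1 : D1 ⊆ Finset.Icc 1 (k-1)) (hD2 : D2 ⊆ Finset.Icc 1 (N-k-1)) :
    ∑ S ∈ Finset.powersetCard k (Finset.Icc 1 N), LS (EA N D1 D2 S) N M
      = LS D1 k M * LS D2 (N-k) M := by
  simp only [LS]
  rw [Finset.sum_mul_sum]
  rw [← Finset.sum_product']
  rw [← Finset.sum_sigma (Finset.powersetCard k (Finset.Icc 1 N))
    (fun S => LabF (EA N D1 D2 S) N M) (fun p => (RatFunc.X : RatFunc ℚ) ^ p.2.sum)]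
  refine Finset.sum_nbij'
    (i := fun p => ((p.1.sort (·≤·)).map (fun v => p.2.getD (v-1) 0),
        ((Finset.Icc 1 N \ p.1).sort (·≤·)).map (fun v => p.2.getD (v-1) 0)))
    (j := fun q => ⟨S0 k q.1 q.2, (q.1 ++ q.2).mergeSort (fun a b => decide (b ≤ a))⟩)
    ?_ ?_ ?_ ?_ ?_
  · rintro ⟨S, g⟩ hp
    rw [Finset.mem_sigma] at hp
    obtain ⟨hSm, hg⟩ := hp
    obtain ⟨hSsub, hScard⟩ := Finset.mem_powersetCard.mp hSm
    rw [Finset.mem_product]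
    exact ⟨fwd_mem_left hSsub hScard hD1 hg, fwd_mem_right hSsub hScard hk hD2 hg⟩
  · rintro ⟨f, f'⟩ hq
    rw [Finset.mem_product] at hq
    obtain ⟨hf, hf'⟩ := hq
    rw [Finset.mem_sigma]
    exact ⟨Finset.mem_powersetCard.mpr ⟨S0_subset hf' hk, card_S0 hf⟩, h_mem hf hf' hk hD1 hD2⟩
  · rintro ⟨S, g⟩ hp
    rw [Finset.mem_sigma] at hp
    obtain ⟨hSm, hg⟩ := hp
    obtain ⟨hSsub, hScard⟩ := Finset.mem_powersetCard.mp hSm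
    show (⟨S0 k ((S.sort (·≤·)).map (fun v => g.getD (v-1) 0))
        (((Finset.Icc 1 N \ S).sort (·≤·)).map (fun v => g.getD (v-1) 0)),
        (((S.sort (·≤·)).map (fun v => g.getD (v-1) 0)
          ++ ((Finset.Icc 1 N \ S).sort (·≤·)).map (fun v => g.getD (v-1) 0)).mergeSort
          (fun a b => decide (b ≤ a)))⟩ : Σ _ : Finset ℕ, List ℕ) = ⟨S, g⟩
    have hSeq : S0 k ((S.sort (·≤·)).map (fun v => g.getD (v-1) 0))
        (((Finset.Icc 1 N \ S).sort (·≤·)).map (fun v => g.getD (v-1) 0)) = S := by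
      simp only [S0, sfun]
      exact fwd_S_eq hSsub hScard hg
    have hgeq := fwd_g_eq hSsub hg
    rw [hSeq, hgeq]
  · rintro ⟨f, f'⟩ hq
    rw [Finset.mem_product] at hq
    obtain ⟨hf, hf'⟩ := hq
    show (((S0 k f f').sort (·≤·)).map
        (fun v => ((f ++ f').mergeSort (fun a b => decide (b ≤ a))).getD (v-1) 0),
        ((Finset.Icc 1 N \ S0 k f f').sort (·≤·)).map
        (fun v => ((f ++ f').mergeSort (fun a b => decide (b ≤ a))).getD (v-1) 0)) = (f, f')
    rw [bwd_fst hf hf', bwd_snd hf hf' hk]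
  · rintro ⟨S, g⟩ hp
    rw [Finset.mem_sigma] at hp
    obtain ⟨hSm, hg⟩ := hp
    obtain ⟨hSsub, hScard⟩ := Finset.mem_powersetCard.mp hSm
    show (RatFunc.X : RatFunc ℚ) ^ g.sum
      = (RatFunc.X : RatFunc ℚ) ^ ((S.sort (·≤·)).map (fun v => g.getD (v-1) 0)).sum
        * (RatFunc.X : RatFunc ℚ) ^ (((Finset.Icc 1 N \ S).sort (·≤·)).map
            (fun v => g.getD (v-1) 0)).sum
    rw [← pow_add]
    congr 1
    exact fwd_weight hSsub hg

end S16

namespace S16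
open Finset List

theorem merge {N k M : ℕ} {D1 D2 : Finset ℕ} (hk : k ≤ N)
    (hD1 : D1 ⊆ Finset.Icc 1 (k-1)) (hD2 : D2 ⊆ Finset.Icc 1 (N-k-1)) :
    ∑ S ∈ Finset.powersetCard k (Finset.Icc 1 N), LS (EA N D1 D2 S) N M
      = LS D1 k M * LS D2 (N-k) M := by
  exact merge' hk hD1 hD2

theorem part1 {N k : ℕ} (hk : k ≤ N) {D1 D2 : Finset ℕ}
    (hD1 : D1 ⊆ Finset.Icc 1 (k-1)) (hD2 : D2 ⊆ Finset.Icc 1 (N-k-1)) :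
    ∑ S ∈ Finset.powersetCard k (Finset.Icc 1 N),
        (RatFunc.X : RatFunc ℚ) ^ (∑ i ∈ EA N D1 D2 S, i)
      = RatFunc.X ^ (∑ i ∈ D1, i + ∑ i ∈ D2, i) * gaussBinom N k := by
  have hd1 : D1.card ≤ k - 1 := by
    calc D1.card ≤ (Finset.Icc 1 (k-1)).card := Finset.card_le_card hD1
    _ = k - 1 := by rw [Nat.card_Icc]; omega
  have hd2 : D2.card ≤ N - k - 1 := by
    calc D2.card ≤ (Finset.Icc 1 (N-k-1)).card := Finset.card_le_card hD2
    _ = N - k - 1 := by rw [Nat.card_Icc]; omega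
  -- the polynomials in z
  set F := RatFunc ℚ
  set P := Finset.powersetCard k (Finset.Icc 1 N) with hP
  let zf : ℕ → ℕ → Polynomial F := fun e L =>
    ∏ i ∈ Finset.range L, (1 - Polynomial.C ((RatFunc.X : RatFunc ℚ)^(i+1) / RatFunc.X^e) * Polynomial.X)
  let Φ : Polynomial F := (∑ S ∈ P, Polynomial.C ((RatFunc.X : RatFunc ℚ) ^ (∑ i ∈ EA N D1 D2 S, i)) *
      zf (EA N D1 D2 S).card N) * Polynomial.C (Dpoly k * Dpoly (N-k))
  let Ψ : Polynomial F := Polynomial.C ((RatFunc.X : RatFunc ℚ) ^ (∑ i ∈ D1, i + ∑ i ∈ D2, i) * Dpoly N) *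
      (zf D1.card k * zf D2.card (N-k))
  have hzf_eval : ∀ (e L j : ℕ), e ≤ N + j →
      (zf e L).eval ((RatFunc.X : RatFunc ℚ) ^ (N + j))
        = ∏ i ∈ Finset.range L, (1 - (RatFunc.X : RatFunc ℚ) ^ ((N + j - e) + i + 1)) := by
    intro e L j hej
    rw [Polynomial.eval_prod]
    refine Finset.prod_congr rfl ?_
    intro i _
    simp only [Polynomial.eval_sub, Polynomial.eval_one, Polynomial.eval_mul, Polynomial.eval_C,
      Polynomial.eval_X]
    congr 1
    rw [div_mul_eq_mul_div, ← pow_add, div_eq_iff (pow_ne_zero _ RatFunc.X_ne_zero), ← pow_add]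
    congr 1
    omega
  have hzf_zero : ∀ (e L : ℕ), (zf e L).eval 0 = 1 := by
    intro e L
    rw [Polynomial.eval_prod]
    refine Finset.prod_eq_one ?_
    intro i _
    simp
  have heval : ∀ j : ℕ, Φ.eval ((RatFunc.X : RatFunc ℚ)^(N+j)) = Ψ.eval ((RatFunc.X : RatFunc ℚ)^(N+j)) := by
    intro j
    have hM := merge (M := N + j) hk hD1 hD2
    -- apply shift to each side
    have hL : ∀ S ∈ P, LS (EA N D1 D2 S) N (N+j)
        = RatFunc.X ^ (∑ i ∈ EA N D1 D2 S, i) * LS ∅ N ((N+j) - (EA N D1 D2 S).card) := by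
      intro S _
      exact shift (EA_subset _ _ _ _) (le_trans (EA_card_le N D1 D2 S) (by omega))
    rw [Finset.sum_congr rfl hL] at hM
    rw [shift hD1 (by omega), shift hD2 (by omega)] at hM
    -- multiply by Dpoly N * (Dpoly k * Dpoly (N-k)) and use wprod
    have key : (∑ S ∈ P, RatFunc.X ^ (∑ i ∈ EA N D1 D2 S, i) *
          (∏ i ∈ Finset.range N, (1 - (RatFunc.X : RatFunc ℚ) ^ (((N+j) - (EA N D1 D2 S).card)+i+1))))
          * (Dpoly k * Dpoly (N-k))
        = (RatFunc.X ^ (∑ i ∈ D1, i + ∑ i ∈ D2, i) * Dpoly N) *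
          ((∏ i ∈ Finset.range k, (1 - (RatFunc.X : RatFunc ℚ) ^ (((N+j) - D1.card)+i+1))) *
           (∏ i ∈ Finset.range (N-k), (1 - (RatFunc.X : RatFunc ℚ) ^ (((N+j) - D2.card)+i+1)))) := by
      have hw : ∀ S ∈ P, RatFunc.X ^ (∑ i ∈ EA N D1 D2 S, i) *
          (∏ i ∈ Finset.range N, (1 - (RatFunc.X:RatFunc ℚ) ^ (((N+j) - (EA N D1 D2 S).card)+i+1)))
          = (RatFunc.X ^ (∑ i ∈ EA N D1 D2 S, i) * LS ∅ N ((N+j) - (EA N D1 D2 S).card)) * Dpoly N := by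
        intro S _
        rw [← wprod]
        ring
      rw [Finset.sum_congr rfl hw, ← Finset.sum_mul, hM, ← wprod, ← wprod]
      ring
    rw [show Φ.eval ((RatFunc.X : RatFunc ℚ)^(N+j)) = (∑ S ∈ P, RatFunc.X ^ (∑ i ∈ EA N D1 D2 S, i) *
          (∏ i ∈ Finset.range N, (1 - (RatFunc.X : RatFunc ℚ) ^ (((N+j) - (EA N D1 D2 S).card)+i+1))))
          * (Dpoly k * Dpoly (N-k)) from ?_,
       show Ψ.eval ((RatFunc.X : RatFunc ℚ)^(N+j)) = (RatFunc.X ^ (∑ i ∈ D1, i + ∑ i ∈ D2, i) * Dpoly N) *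
          ((∏ i ∈ Finset.range k, (1 - (RatFunc.X : RatFunc ℚ) ^ (((N+j) - D1.card)+i+1))) *
           (∏ i ∈ Finset.range (N-k), (1 - (RatFunc.X : RatFunc ℚ) ^ (((N+j) - D2.card)+i+1)))) from ?_]
    · exact key
    · simp only [Ψ, Polynomial.eval_mul, Polynomial.eval_C]
      rw [hzf_eval _ _ _ (by omega), hzf_eval _ _ _ (by omega)]
    · simp only [Φ, Polynomial.eval_mul, Polynomial.eval_C, Polynomial.eval_finset_sum]
      congr 1
      refine Finset.sum_congr rfl ?_
      intro S hS
      rw [hzf_eval _ _ _ (le_trans (EA_card_le N D1 D2 S) (by omega))]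
  have hPhiPsi : Φ = Ψ := by
    refine Polynomial.eq_of_infinite_eval_eq _ _ ?_
    refine Set.infinite_of_injective_forall_mem
      (f := fun j : ℕ => (RatFunc.X : RatFunc ℚ)^(N+j)) ?_ ?_
    · intro a b hab
      have := X_pow_injective hab
      omega
    · intro j
      exact heval j
  have h0 := congrArg (Polynomial.eval 0) hPhiPsi
  simp only [Φ, Ψ, Polynomial.eval_mul, Polynomial.eval_C, Polynomial.eval_finset_sum] at h0
  simp only [hzf_zero, mul_one] at h0
  -- h0 : (∑ S ∈ P, X^G S) * (Dpoly k * Dpoly (N-k)) = X^w * Dpoly N * (1 * 1)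
  rw [gaussBinom_eq hk]
  have hne : (Dpoly k * Dpoly (N-k)) ≠ 0 := mul_ne_zero (Dpoly_ne _) (Dpoly_ne _)
  rw [← mul_div_assoc, eq_div_iff hne]
  linear_combination h0

end S16
namespace S16
open Finset List

/-! ### permutation words -/

lemma mem_permWords {L : ℕ} {w : List ℕ} : w ∈ permWords L ↔ w.Perm (List.range' 1 L) := by
  rw [permWords, List.mem_toFinset, List.mem_permutations]

lemma permw_length {L : ℕ} {w : List ℕ} (h : w.Perm (List.range' 1 L)) : w.length = L := by
  rw [h.length_eq, List.length_range']

lemma permw_nodup {L : ℕ} {w : List ℕ} (h : w.Perm (List.range' 1 L)) : w.Nodup :=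
  h.nodup_iff.mpr (List.nodup_range')

lemma permw_mem {L : ℕ} {w : List ℕ} (h : w.Perm (List.range' 1 L)) {v : ℕ} :
    v ∈ w ↔ 1 ≤ v ∧ v ≤ L := by
  rw [h.mem_iff, List.mem_range'_1]
  omega

/-! ### arrangements -/

def arr (σ s : List ℕ) : List ℕ := σ.map (fun r => s.getD (r-1) 0)

lemma arr_perm {σ s : List ℕ} {L : ℕ} (hσ : σ.Perm (List.range' 1 L)) (hlen : s.length = L) :
    (arr σ s).Perm s := by
  have h1 : (arr σ s).Perm ((List.range' 1 L).map (fun r => s.getD (r-1) 0)) :=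
    hσ.map _
  rwa [range'_map_getD hlen] at h1

lemma length_arr (σ s : List ℕ) : (arr σ s).length = σ.length := by
  simp [arr]

lemma count_range'_lt (N v : ℕ) :
    ((List.range' 1 N).filter (fun x => x < v)).length = min (v-1) N := by
  induction N with
  | zero => simp
  | succ N ih =>
    rw [List.range'_1_concat, List.filter_append, List.length_append, ih]
    by_cases h : N + 1 < v
    · rw [List.filter_cons_of_pos (by simp only [decide_eq_true_eq]; omega)]
      simp only [List.filter_nil, List.length_cons, List.length_nil]
      omega
    · rw [List.filter_cons_of_neg (by simp only [decide_eq_true_eq]; omega)]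
      simp only [List.filter_nil, List.length_nil]
      omega

lemma stdWord_arr {σ s : List ℕ} {L : ℕ} (hσ : σ.Perm (List.range' 1 L))
    (hs : List.Pairwise (·<·) s) (hlen : s.length = L) : stdWord (arr σ s) = σ := by
  unfold stdWord arr
  rw [List.map_map]
  have : ∀ r ∈ σ, ((List.map (fun r => s.getD (r-1) 0) σ).filter
      (fun b => b < s.getD (r-1) 0)).length + 1 = r := by
    intro r hr
    have hrL : 1 ≤ r ∧ r ≤ L := (permw_mem hσ).mp hr
    rw [List.filter_map]
    rw [List.length_map]
    have hcongr : σ.filter ((fun b => decide (b < s.getD (r-1) 0)) ∘ (fun r => s.getD (r-1) 0))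
        = σ.filter (fun x => decide (x < r)) := by
      refine List.filter_congr ?_
      intro x hx
      have hxL : 1 ≤ x ∧ x ≤ L := (permw_mem hσ).mp hx
      simp only [Function.comp_apply, decide_eq_decide]
      constructor
      · intro hlt
        by_contra hge
        push_neg at hge
        rcases Nat.eq_or_lt_of_le hge with h | h
        · subst h; omega
        · have := sorted_getD_strictMono hs (a := r-1) (b := x-1) (by omega) (by omega)
          omega
      · intro hlt
        exact sorted_getD_strictMono hs (a := x-1) (b := r-1) (by omega) (by omega)
    rw [hcongr, (hσ.filter _).length_eq, count_range'_lt]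
    omega
  calc σ.map ((fun a => (List.filter (fun b => decide (b < a))
        (List.map (fun r => s.getD (r-1) 0) σ)).length + 1) ∘ (fun r => s.getD (r-1) 0))
      = σ.map id := List.map_congr_left (by intro a ha; simpa using this a ha)
    _ = σ := List.map_id σ

lemma arr_of_std {u s : List ℕ} (hs : List.Pairwise (·<·) s) (hp : s.Perm u) :
    u = arr (stdWord u) s := by
  refine List.ext_getElem (by simp [arr, stdWord, hp.length_eq]) ?_
  intro j hj hj2
  unfold arr stdWord at hj2 ⊢
  rw [List.getElem_map, List.getElem_map]
  have hcount : (u.filter (fun b => decide (b < u[j]))).length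
      = (s.filter (fun b => decide (b < u[j]))).length := ((hp.filter _).length_eq).symm
  have hmem : u[j] ∈ s := hp.mem_iff.mpr (List.getElem_mem _)
  obtain ⟨i, hi, hiv⟩ := List.mem_iff_getElem.mp hmem
  have : (s.filter (fun b => decide (b < u[j]))).length = i := by
    have := sorted_count_lt hs i hi
    rw [List.getD_eq_getElem _ _ hi, hiv] at this
    exact this
  rw [hcount, this]
  simp only [Nat.add_sub_cancel]
  rw [List.getD_eq_getElem _ _ hi, hiv]

/-! ### the map from subsets to permutation words -/

def thetaS (m n : ℕ) (τ π : List ℕ) (S : Finset ℕ) : List ℕ :=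
  arr (τ ++ [m+1]) (S.sort (·≤·)) ++ arr π ((Finset.Icc 1 (m+n+1) \ S).sort (·≤·))

section part2

variable {m n : ℕ} {τ π : List ℕ}

lemma inttau_perm (hτ : τ.Perm (List.range' 1 m)) :
    (τ ++ [m+1]).Perm (List.range' 1 (m+1)) := by
  rw [List.range'_1_concat]
  exact hτ.append (by simp [Nat.add_comm])

variable (hτ : τ.Perm (List.range' 1 m)) (hπ : π.Perm (List.range' 1 n))

section withS
variable {S : Finset ℕ} (hS : S ⊆ Finset.Icc 1 (m+n+1)) (hcard : S.card = m+1)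

include hτ hS hcard in
lemma thetaS_take : (thetaS m n τ π S).take (m+1) = arr (τ ++ [m+1]) (S.sort (·≤·)) := by
  refine List.take_left' ?_
  rw [length_arr, List.length_append, permw_length hτ]
  simp

include hτ hS hcard in
lemma thetaS_drop : (thetaS m n τ π S).drop (m+1) = arr π ((Finset.Icc 1 (m+n+1) \ S).sort (·≤·)) := by
  refine List.drop_left' ?_
  rw [length_arr, List.length_append, permw_length hτ]
  simp

include hτ hπ hS hcard in
lemma thetaS_perm : (thetaS m n τ π S).Perm (List.range' 1 (m+n+1)) := by
  unfold thetaS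
  have h1 := arr_perm (inttau_perm hτ) (s := S.sort (·≤·)) (by rw [Finset.length_sort, hcard])
  have h2 := arr_perm hπ (s := (Finset.Icc 1 (m+n+1) \ S).sort (·≤·))
    (by rw [Finset.length_sort, compl_card hS hcard]; omega)
  exact (h1.append h2).trans (sorts_perm_range' hS)

include hτ hπ hS hcard in
lemma thetaS_mem_filter :
    thetaS m n τ π S ∈ (permWords (m + n + 1)).filter
        (fun w => stdWord (w.take (m + 1)) = τ ++ [m + 1] ∧ stdWord (w.drop (m + 1)) = π) := by
  rw [Finset.mem_filter]
  refine ⟨mem_permWords.mpr (thetaS_perm hτ hπ hS hcard), ?_, ?_⟩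
  · rw [thetaS_take hτ hS hcard]
    exact stdWord_arr (inttau_perm hτ) (S16.sort_sorted_lt _) (by rw [Finset.length_sort, hcard])
  · rw [thetaS_drop hτ hS hcard]
    exact stdWord_arr hπ (S16.sort_sorted_lt _)
      (by rw [Finset.length_sort, compl_card hS hcard]; omega)

include hτ hS hcard in
lemma thetaS_take_toFinset : ((thetaS m n τ π S).take (m+1)).toFinset = S := by
  rw [thetaS_take hτ hS hcard]
  have hp : (arr (τ ++ [m+1]) (S.sort (·≤·))).Perm (S.sort (·≤·)) :=
    arr_perm (inttau_perm hτ) (by rw [Finset.length_sort, hcard])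
  ext v
  rw [List.mem_toFinset, hp.mem_iff, Finset.mem_sort]

end withS

include hτ hπ in
lemma filtered_eq (hτ' : τ.Perm (List.range' 1 m)) :
    (permWords (m+n+1)).filter
        (fun w => stdWord (w.take (m + 1)) = τ ++ [m + 1] ∧ stdWord (w.drop (m + 1)) = π)
      = (Finset.powersetCard (m+1) (Finset.Icc 1 (m+n+1))).image (thetaS m n τ π) := by
  ext θ
  constructor
  · intro hθ
    rw [Finset.mem_filter] at hθ
    obtain ⟨hperm, h1, h2⟩ := hθ
    rw [mem_permWords] at hperm
    have hlen : θ.length = m+n+1 := permw_length hperm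
    have hnodup : θ.Nodup := permw_nodup hperm
    set S : Finset ℕ := (θ.take (m+1)).toFinset with hSdef
    have htknodup : (θ.take (m+1)).Nodup := (List.take_sublist _ _).nodup hnodup
    have htklen : (θ.take (m+1)).length = m+1 := by
      rw [List.length_take]
      omega
    have hScard : S.card = m+1 := by
      rw [hSdef, List.toFinset_card_of_nodup htknodup, htklen]
    have hSsub : S ⊆ Finset.Icc 1 (m+n+1) := by
      intro v hv
      rw [hSdef, List.mem_toFinset] at hv
      have := (permw_mem hperm).mp (List.mem_of_mem_take hv)
      rw [Finset.mem_Icc]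
      exact this
    rw [Finset.mem_image]
    refine ⟨S, Finset.mem_powersetCard.mpr ⟨hSsub, hScard⟩, ?_⟩
    -- θ = thetaS S
    have hsortperm : (S.sort (·≤·)).Perm (θ.take (m+1)) := by
      refine (List.perm_ext_iff_of_nodup (Finset.sort_nodup _ _) htknodup).mpr ?_
      intro a
      rw [Finset.mem_sort, hSdef, List.mem_toFinset]
    have htake : θ.take (m+1) = arr (τ ++ [m+1]) (S.sort (·≤·)) := by
      have := arr_of_std (S16.sort_sorted_lt S) hsortperm
      rwa [h1] at this
    have hdrnodup : (θ.drop (m+1)).Nodup := (List.drop_sublist _ _).nodup hnodup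
    have hT : Finset.Icc 1 (m+n+1) \ S = (θ.drop (m+1)).toFinset := by
      ext v
      simp only [Finset.mem_sdiff, Finset.mem_Icc, hSdef, List.mem_toFinset]
      constructor
      · rintro ⟨hv, hnot⟩
        have hmem : v ∈ θ := (permw_mem hperm).mpr hv
        rcases (List.mem_append.mp (by rwa [List.take_append_drop (m+1) θ] : v ∈ θ.take (m+1) ++ θ.drop (m+1))) with h | h
        · exact absurd h hnot
        · exact h
      · intro hv
        have hmem : v ∈ θ := List.mem_of_mem_drop hv
        refine ⟨(permw_mem hperm).mp hmem, ?_⟩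
        intro hc
        exact (List.disjoint_take_drop (l := θ) hnodup le_rfl) hc hv
    have hsortperm2 : ((Finset.Icc 1 (m+n+1) \ S).sort (·≤·)).Perm (θ.drop (m+1)) := by
      refine (List.perm_ext_iff_of_nodup (Finset.sort_nodup _ _) hdrnodup).mpr ?_
      intro a
      rw [Finset.mem_sort, hT, List.mem_toFinset]
    have hdrop : θ.drop (m+1) = arr π ((Finset.Icc 1 (m+n+1) \ S).sort (·≤·)) := by
      have := arr_of_std (S16.sort_sorted_lt _) hsortperm2
      rwa [h2] at this
    rw [← List.take_append_drop (m+1) θ, htake, hdrop]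
    rfl
  · intro hθ
    rw [Finset.mem_image] at hθ
    obtain ⟨S, hSmem, rfl⟩ := hθ
    obtain ⟨hSsub, hScard⟩ := Finset.mem_powersetCard.mp hSmem
    exact thetaS_mem_filter hτ hπ hSsub hScard

end part2

end S16
namespace S16
open Finset List

/-! ### descent sets and the inverse major index -/

def desSet (w : List ℕ) : Finset ℕ :=
  (Finset.Icc 1 (w.length - 1)).filter (fun i => w.idxOf (i+1) < w.idxOf i)

lemma mem_desSet {w : List ℕ} {i : ℕ} :
    i ∈ desSet w ↔ (1 ≤ i ∧ i ≤ w.length - 1) ∧ w.idxOf (i+1) < w.idxOf i := by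
  rw [desSet, Finset.mem_filter, Finset.mem_Icc]

lemma desSet_subset (w : List ℕ) : desSet w ⊆ Finset.Icc 1 (w.length - 1) :=
  Finset.filter_subset _ _

lemma imaj_eq_sum_desSet {w : List ℕ} {L : ℕ} (hw : w.Perm (List.range' 1 L)) :
    imajWord w = ∑ i ∈ desSet w, i := by
  unfold imajWord desSet
  rw [permw_length hw, Finset.sum_filter]
  rcases Nat.eq_zero_or_pos L with rfl | hL
  · simp
  have h1 : ∑ i ∈ Finset.Icc 1 L, (if w.idxOf (i+1) < w.idxOf i then i else 0)
      = ∑ k ∈ Finset.range L, (if w.idxOf (k+2) < w.idxOf (k+1) then k+1 else 0) := by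
    refine Finset.sum_nbij' (i := fun a => a - 1) (j := fun k => k + 1) ?_ ?_ ?_ ?_ ?_
    · intro a ha; simp only [Finset.mem_Icc] at ha; simp only [Finset.mem_range]; omega
    · intro a ha; simp only [Finset.mem_range] at ha; simp only [Finset.mem_Icc]; omega
    · intro a ha; simp only [Finset.mem_Icc] at ha; show a - 1 + 1 = a; omega
    · intro a ha; simp only [Finset.mem_range] at ha; show a + 1 - 1 = a; omega
    · intro a ha
      simp only [Finset.mem_Icc] at ha
      rw [show a-1+2 = a+1 by omega, show a-1+1 = a by omega]
  have h2 := Finset.sum_Icc_succ_top (a := 1) (b := L-1) (by omega)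
    (f := fun i => if w.idxOf (i+1) < w.idxOf i then i else 0)
  rw [show (L-1)+1 = L by omega] at h2
  have hlast : (if w.idxOf (L+1) < w.idxOf L then L else 0) = 0 := by
    rw [if_neg]
    have h2 : (L+1) ∉ w := by
      rw [permw_mem hw]; omega
    have h3 : L ∈ w := by
      rw [permw_mem hw]; omega
    have h4 : w.idxOf (L+1) = w.length := List.idxOf_eq_length_iff.mpr h2
    have h5 : w.idxOf L < w.length := List.idxOf_lt_length_iff.mpr h3
    omega
  rw [← h1, h2, hlast, add_zero]

/-! ### indexOf in arrangements -/

lemma indexOf_map_of_inj : ∀ (l : List ℕ) (f : ℕ → ℕ) (a : ℕ),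
    (∀ x ∈ l, f x = f a → x = a) → (l.map f).idxOf (f a) = l.idxOf a := by
  intro l f a
  induction l with
  | nil => intro _; rfl
  | cons x t ih =>
    intro h
    by_cases hxa : x = a
    · subst hxa
      rw [List.map_cons, List.idxOf_cons_eq _ rfl, List.idxOf_cons_eq _ rfl]
    · have hfxa : f x ≠ f a := fun hc => hxa (h x (List.mem_cons_self) hc)
      rw [List.map_cons, List.idxOf_cons_ne _ (by exact hfxa),
        List.idxOf_cons_ne _ (by exact hxa)]
      rw [ih (fun y hy => h y (List.mem_cons_of_mem _ hy))]

lemma indexOf_arr {σ s : List ℕ} {L : ℕ} (hσ : σ.Perm (List.range' 1 L))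
    (hs : List.Pairwise (·<·) s) (hlen : s.length = L) {r : ℕ} (hr1 : 1 ≤ r) (hr2 : r ≤ L) :
    (arr σ s).idxOf (s.getD (r-1) 0) = σ.idxOf r := by
  unfold arr
  refine indexOf_map_of_inj σ (fun x => s.getD (x-1) 0) r ?_
  intro x hx hfx
  have hxL := (permw_mem hσ).mp hx
  by_contra hne
  rcases Nat.lt_or_ge x r with h | h
  · have := sorted_getD_strictMono hs (a := x-1) (b := r-1) (by omega) (by omega)
    omega
  · have hlt : r < x := by omega
    have := sorted_getD_strictMono hs (a := r-1) (b := x-1) (by omega) (by omega)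
    omega

section table

variable {m n : ℕ} {τ π : List ℕ} {S : Finset ℕ}
variable (hτ : τ.Perm (List.range' 1 m)) (hπ : π.Perm (List.range' 1 n))
variable (hS : S ⊆ Finset.Icc 1 (m+n+1)) (hcard : S.card = m+1)

include hτ hS hcard in
lemma pos_mem {v : ℕ} (hvS : v ∈ S) :
    (thetaS m n τ π S).idxOf v = (τ ++ [m+1]).idxOf (rk S v) := by
  have hlen : (S.sort (·≤·)).length = m+1 := by rw [Finset.length_sort, hcard]
  have hmem : v ∈ arr (τ ++ [m+1]) (S.sort (·≤·)) := by
    rw [(arr_perm (inttau_perm hτ) hlen).mem_iff, Finset.mem_sort]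
    exact hvS
  rw [thetaS, List.idxOf_append_of_mem hmem]
  have hv := sort_getD_rk hvS
  have hrle : rk S v ≤ m+1 := by
    calc rk S v ≤ S.card := rk_le_card S v
    _ = m+1 := hcard
  have key := indexOf_arr (inttau_perm hτ) (S16.sort_sorted_lt S) hlen
    (r := rk S v) (rk_pos hvS) hrle
  rw [hv] at key
  exact key

include hτ hπ hS hcard in
lemma pos_not_mem {v : ℕ} (hv1 : 1 ≤ v) (hv2 : v ≤ m+n+1) (hvS : v ∉ S) :
    (thetaS m n τ π S).idxOf v
      = (m+1) + π.idxOf (rk (Finset.Icc 1 (m+n+1) \ S) v) := by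
  have hvT : v ∈ Finset.Icc 1 (m+n+1) \ S := by
    rw [Finset.mem_sdiff, Finset.mem_Icc]
    exact ⟨⟨hv1, hv2⟩, hvS⟩
  have hlen1 : (S.sort (·≤·)).length = m+1 := by rw [Finset.length_sort, hcard]
  have hlen2 : ((Finset.Icc 1 (m+n+1) \ S).sort (·≤·)).length = n := by
    rw [Finset.length_sort, compl_card hS hcard]; omega
  have hnmem : v ∉ arr (τ ++ [m+1]) (S.sort (·≤·)) := by
    rw [(arr_perm (inttau_perm hτ) hlen1).mem_iff, Finset.mem_sort]
    exact hvS
  rw [thetaS, List.idxOf_append_of_notMem hnmem, length_arr, List.length_append,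
    permw_length hτ]
  have hv := sort_getD_rk hvT
  have hrle : rk (Finset.Icc 1 (m+n+1) \ S) v ≤ n := by
    calc rk _ v ≤ (Finset.Icc 1 (m+n+1) \ S).card := rk_le_card _ v
    _ = n := by rw [compl_card hS hcard]; omega
  have key := indexOf_arr hπ (S16.sort_sorted_lt _) hlen2
    (r := rk (Finset.Icc 1 (m+n+1) \ S) v) (rk_pos hvT) hrle
  rw [hv] at key
  rw [key]
  simp

include hτ hπ hS hcard in
lemma desSet_thetaS :
    desSet (thetaS m n τ π S) = EA (m+n+1) (desSet (τ ++ [m+1])) (desSet π) S := by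
  have hθperm := thetaS_perm hτ hπ hS hcard
  have hθlen : (thetaS m n τ π S).length = m+n+1 := permw_length hθperm
  have hstlen : (τ ++ [m+1]).length = m+1 := by
    simp [permw_length hτ]
  have hπlen : π.length = n := permw_length hπ
  have hTcard : (Finset.Icc 1 (m+n+1) \ S).card = n := by
    rw [compl_card hS hcard]; omega
  ext i
  rw [mem_desSet, hθlen, EA, Finset.mem_filter, Finset.mem_Icc]
  constructor
  · rintro ⟨⟨hi1, hi2⟩, hcond⟩
    refine ⟨⟨hi1, hi2⟩, ?_⟩
    by_cases h2 : i+1 ∈ S <;> by_cases h1 : i ∈ S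
    · rw [if_pos h2, if_pos h1]
      rw [pos_mem hτ hS hcard h1, pos_mem hτ hS hcard h2, rk_succ_of_mem h1 h2] at hcond
      rw [mem_desSet, hstlen]
      have hr1 : 1 ≤ rk S i := rk_pos h1
      have hr2 : rk S i + 1 ≤ m + 1 := by
        rw [← rk_succ_of_mem h1 h2, ← hcard]
        exact rk_le_card S (i+1)
      exact ⟨⟨hr1, by omega⟩, hcond⟩
    · rw [if_pos h2, if_neg h1]
      trivial
    · -- i ∈ S, i+1 ∉ S : contradiction with hcond
      exfalso
      rw [pos_mem hτ hS hcard h1,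
        pos_not_mem hτ hπ hS hcard (by omega) (by omega) h2] at hcond
      have hin : rk S i ∈ (τ ++ [m+1]) := by
        rw [permw_mem (inttau_perm hτ)]
        refine ⟨rk_pos h1, ?_⟩
        calc rk S i ≤ S.card := rk_le_card S i
        _ = m+1 := hcard
      have hlt : (τ ++ [m+1]).idxOf (rk S i) < m+1 := by
        have := List.idxOf_lt_length_iff.mpr hin
        rw [hstlen] at this
        exact this
      omega
    · rw [if_neg h2, if_neg h1]
      rw [pos_not_mem hτ hπ hS hcard (by omega) (by omega) h1,
        pos_not_mem hτ hπ hS hcard (by omega) (by omega) h2] at hcond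
      have h1T : i ∈ Finset.Icc 1 (m+n+1) \ S := by
        rw [Finset.mem_sdiff, Finset.mem_Icc]; exact ⟨⟨by omega, by omega⟩, h1⟩
      have h2T : i+1 ∈ Finset.Icc 1 (m+n+1) \ S := by
        rw [Finset.mem_sdiff, Finset.mem_Icc]; exact ⟨⟨by omega, by omega⟩, h2⟩
      rw [rk_succ_of_mem h1T h2T] at hcond
      rw [mem_desSet, hπlen]
      have hr1 : 1 ≤ rk (Finset.Icc 1 (m+n+1) \ S) i := rk_pos h1T
      have hr2 : rk (Finset.Icc 1 (m+n+1) \ S) i + 1 ≤ n := by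
        have h5 := rk_le_card (Finset.Icc 1 (m+n+1) \ S) (i+1)
        rw [hTcard] at h5
        have h6 := rk_succ_of_mem h1T h2T
        omega
      exact ⟨⟨hr1, by omega⟩, by omega⟩
  · rintro ⟨⟨hi1, hi2⟩, hcond⟩
    refine ⟨⟨hi1, hi2⟩, ?_⟩
    by_cases h2 : i+1 ∈ S <;> by_cases h1 : i ∈ S
    · rw [if_pos h2, if_pos h1] at hcond
      rw [pos_mem hτ hS hcard h1, pos_mem hτ hS hcard h2, rk_succ_of_mem h1 h2]
      exact (mem_desSet.mp hcond).2
    · rw [if_pos h2, if_neg h1] at hcond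
      rw [pos_mem hτ hS hcard h2,
        pos_not_mem hτ hπ hS hcard (by omega) (by omega) h1]
      have hin : rk S (i+1) ∈ (τ ++ [m+1]) := by
        rw [permw_mem (inttau_perm hτ)]
        refine ⟨rk_pos h2, ?_⟩
        calc rk S (i+1) ≤ S.card := rk_le_card S (i+1)
        _ = m+1 := hcard
      have := List.idxOf_lt_length_iff.mpr hin
      rw [hstlen] at this
      omega
    · rw [if_neg h2, if_pos h1] at hcond
      exact absurd hcond (by simp)
    · rw [if_neg h2, if_neg h1] at hcond
      rw [pos_not_mem hτ hπ hS hcard (by omega) (by omega) h1,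
        pos_not_mem hτ hπ hS hcard (by omega) (by omega) h2]
      have h1T : i ∈ Finset.Icc 1 (m+n+1) \ S := by
        rw [Finset.mem_sdiff, Finset.mem_Icc]; exact ⟨⟨by omega, by omega⟩, h1⟩
      have h2T : i+1 ∈ Finset.Icc 1 (m+n+1) \ S := by
        rw [Finset.mem_sdiff, Finset.mem_Icc]; exact ⟨⟨by omega, by omega⟩, h2⟩
      rw [rk_succ_of_mem h1T h2T]
      have := (mem_desSet.mp hcond).2
      omega

end table

lemma desSet_append_max {m : ℕ} {τ : List ℕ} (hτ : τ.Perm (List.range' 1 m)) :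
    desSet (τ ++ [m+1]) = desSet τ := by
  have hτlen : τ.length = m := permw_length hτ
  ext i
  rw [mem_desSet, mem_desSet, List.length_append, hτlen]
  simp only [List.length_cons, List.length_nil]
  constructor
  · rintro ⟨⟨hi1, hi2⟩, hcond⟩
    have hi2' : i ≤ m := by omega
    rcases Nat.eq_or_lt_of_le hi2' with heq | hlt
    · -- i = m : impossible
      exfalso
      subst heq
      have h2 : (i+1) ∉ τ := by rw [permw_mem hτ]; omega
      have h3 : i ∈ τ := by rw [permw_mem hτ]; omega
      rw [List.idxOf_append_of_notMem h2, List.idxOf_append_of_mem h3] at hcond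
      have := List.idxOf_lt_length_iff.mpr h3
      rw [List.idxOf_cons_eq _ rfl] at hcond
      omega
    · have h2 : (i+1) ∈ τ := by rw [permw_mem hτ]; omega
      have h3 : i ∈ τ := by rw [permw_mem hτ]; omega
      rw [List.idxOf_append_of_mem h2, List.idxOf_append_of_mem h3] at hcond
      exact ⟨⟨hi1, by omega⟩, hcond⟩
  · rintro ⟨⟨hi1, hi2⟩, hcond⟩
    have h2 : (i+1) ∈ τ := by rw [permw_mem hτ]; omega
    have h3 : i ∈ τ := by rw [permw_mem hτ]; omega
    rw [List.idxOf_append_of_mem h2, List.idxOf_append_of_mem h3]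
    exact ⟨⟨hi1, by omega⟩, hcond⟩

end S16

open Finset List S16

/-- For `τ ∈ S_m` and `π ∈ S_n` (as permutation words), the sum of
`q^{imajWord(θ)}` over all `θ = uv ∈ S_{m+n+1}` with `u` the first `m+1` letters and `v` the
last `n` letters, `std(u) = ∫τ = τ·(m+1)` and `std(v) = π`, equals
`q^{imajWord(τ)+imajWord(π)} C(m+n+1, m+1)_q`. -/
theorem stmt16 (m n : ℕ) (τ π : List ℕ) (hτ : τ ∈ permWords m) (hπ : π ∈ permWords n) :
    (∑ w ∈ (permWords (m + n + 1)).filter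
        (fun w => stdWord (w.take (m + 1)) = τ ++ [m + 1] ∧ stdWord (w.drop (m + 1)) = π),
      (RatFunc.X : RatFunc ℚ) ^ imajWord w) =
      (RatFunc.X : RatFunc ℚ) ^ (imajWord τ + imajWord π) * gaussBinom (m + n + 1) (m + 1) := by
  have hτp : τ.Perm (List.range' 1 m) := mem_permWords.mp hτ
  have hπp : π.Perm (List.range' 1 n) := mem_permWords.mp hπ
  rw [filtered_eq hτp hπp hτp]
  rw [Finset.sum_image (by
    intro S hS S' hS' h
    obtain ⟨hsub, hc⟩ := Finset.mem_powersetCard.mp hS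
    obtain ⟨hsub', hc'⟩ := Finset.mem_powersetCard.mp hS'
    rw [← thetaS_take_toFinset hτp hsub hc, ← thetaS_take_toFinset hτp hsub' hc', h])]
  have hsum : ∀ S ∈ Finset.powersetCard (m+1) (Finset.Icc 1 (m+n+1)),
      (RatFunc.X : RatFunc ℚ) ^ imajWord (thetaS m n τ π S)
        = (RatFunc.X : RatFunc ℚ) ^ (∑ i ∈ EA (m+n+1) (desSet (τ ++ [m+1])) (desSet π) S, i) := by
    intro S hS
    obtain ⟨hsub, hc⟩ := Finset.mem_powersetCard.mp hS
    rw [imaj_eq_sum_desSet (thetaS_perm hτp hπp hsub hc), desSet_thetaS hτp hπp hsub hc]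
  rw [Finset.sum_congr rfl hsum]
  have hD1 : desSet (τ ++ [m+1]) ⊆ Finset.Icc 1 ((m+1)-1) := by
    have h := desSet_subset (τ ++ [m+1])
    have hlen : (τ ++ [m+1]).length = m+1 := by simp [permw_length hτp]
    rw [hlen] at h
    exact h
  have hD2 : desSet π ⊆ Finset.Icc 1 ((m+n+1)-(m+1)-1) := by
    have h := desSet_subset π
    rw [permw_length hπp] at h
    rw [show (m+n+1)-(m+1)-1 = n - 1 by omega]
    exact h
  rw [part1 (by omega : m+1 ≤ m+n+1) hD1 hD2]
  congr 2
  rw [desSet_append_max hτp, ← imaj_eq_sum_desSet hτp, ← imaj_eq_sum_desSet hπp]
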